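/- For all x, y ∈ K = ℚ(ζ₈, √5), the 2×2 complex matrix Ξ(x, y) = [[x, y], [ζ₈·σ(y), σ(x)]] has determinant det Ξ(x, y) = x·σ(x) − ζ₈·y·σ(y), and this determinant equals 0 if and only if x = 0 and y = 0. In particular, each user's codeword difference matrix Ξ(x, y) with (x, y) ≠ (0, 0) is invertible (full-rank / nonvanishing-determinant property). -/
import Mathlib


open Complex Matrix

/-- The eighth root of unity `ζ₈ = e^{iπ/4}`. -/
noncomputable def ζ₈ : ℂ := Complex.exp (Real.pi * Complex.I / 4)

/-- The golden ratio `θ = (1+√5)/2` as a complex number. -/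
noncomputable def θ : ℂ := (((1 + Real.sqrt 5) / 2 : ℝ) : ℂ)

/-- Its conjugate `θ̄ = (1−√5)/2` as a complex number. -/
noncomputable def θbar : ℂ := (((1 - Real.sqrt 5) / 2 : ℝ) : ℂ)

/-- The subfield `ℚ(i) = {p + q·i : p, q ∈ ℚ}` of `ℂ`, as a set. -/
def Qi : Set ℂ := {z | ∃ p q : ℚ, z = (p : ℂ) + (q : ℂ) * Complex.I}

/-- The element `x = x₀ + x₁ζ₈ + x₂θ + x₃ζ₈θ` of `K = ℚ(ζ₈, √5)` with coordinates
`x₀, x₁, x₂, x₃ ∈ ℚ(i)` over the basis `(1, ζ₈, θ, ζ₈θ)`. -/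
noncomputable def emb (a : Fin 4 → ℂ) : ℂ := a 0 + a 1 * ζ₈ + a 2 * θ + a 3 * ζ₈ * θ

/-- The image `σ(x) = x₀ + x₁ζ₈ + x₂θ̄ + x₃ζ₈θ̄` of `x` under the automorphism `σ` of `K`
fixing `F = ℚ(ζ₈)` with `σ(√5) = −√5`. -/
noncomputable def embσ (a : Fin 4 → ℂ) : ℂ := a 0 + a 1 * ζ₈ + a 2 * θbar + a 3 * ζ₈ * θbar

/-- The Golden-code codeword matrix `Ξ(x, y) = [[x, y], [ζ₈·σ(y), σ(x)]]`, where `x` and `y`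
are given by their coordinates `a`, `b` over the `ℚ(i)`-basis `(1, ζ₈, θ, ζ₈θ)` of `K`. -/
noncomputable def Xi (a b : Fin 4 → ℂ) : Matrix (Fin 2) (Fin 2) ℂ :=
  !![emb a, emb b; ζ₈ * embσ b, embσ a]

set_option maxHeartbeats 4000000

private lemma gc_L1 : ∀ x0 x1 y0 y1 : ZMod 5,
    x0*x0 + 2*(x1*x1) = 4*(y0*y1) → 2*(x0*x1) = y0*y0 + 2*(y1*y1) →
    x0 = 0 ∧ x1 = 0 ∧ y0 = 0 ∧ y1 = 0 := by decide

private lemma gc_pidiv (X Y : ℤ) (h : (X : ZMod 5) + 2*(Y : ZMod 5) = 0) :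
    ∃ er ei : ℤ, X = 2*er + ei ∧ Y = 2*ei - er := by
  have h5 : (5:ℤ) ∣ (X + 2*Y) := by
    have h2 : ((X + 2*Y : ℤ) : ZMod 5) = 0 := by push_cast; linear_combination h
    exact_mod_cast (ZMod.intCast_zmod_eq_zero_iff_dvd _ 5).mp h2
  obtain ⟨k, hk⟩ := h5
  exact ⟨2*k - Y, k, by omega, by omega⟩

private lemma gc_sqz (x : ℤ) (h : x*x ≤ 0) : x = 0 := by nlinarith [mul_self_nonneg x]

private lemma gc_ratsqrt2 (x y : ℚ) (h : (x:ℝ) + (y:ℝ) * Real.sqrt 2 = 0) : x = 0 ∧ y = 0 := by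
  by_cases hy : y = 0
  · subst hy
    constructor
    · exact_mod_cast by simpa using h
    · rfl
  · exfalso
    have hyR : (y:ℝ) ≠ 0 := by exact_mod_cast hy
    have hval : Real.sqrt 2 = ((-x/y : ℚ):ℝ) := by
      push_cast
      field_simp
      linarith [h]
    exact irrational_sqrt_two ⟨-x/y, hval.symm⟩

private lemma gc_ratscale (r : ℚ) (D : ℕ) (h : r.den ∣ D) : ∃ z : ℤ, (z : ℚ) = r * D := by
  obtain ⟨k, hk⟩ := h
  refine ⟨r.num * k, ?_⟩
  subst hk
  have hd0 : (r.den : ℚ) ≠ 0 := Nat.cast_ne_zero.mpr r.den_ne_zero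
  have hnum : (r.num : ℚ) = r * r.den := (div_eq_iff hd0).mp (Rat.num_div_den r)
  push_cast
  rw [hnum]
  ring

private lemma gc_hsum : θ + θbar = 1 := by
  rw [θ, θbar]; push_cast; ring

private lemma gc_hprod : θ * θbar = -1 := by
  rw [θ, θbar, ← Complex.ofReal_mul]
  have h5 : Real.sqrt 5 * Real.sqrt 5 = 5 := Real.mul_self_sqrt (by norm_num)
  have : ((1 + Real.sqrt 5) / 2) * ((1 - Real.sqrt 5) / 2) = -1 := by linear_combination (-1/4)*h5
  rw [this]; norm_num

private lemma gc_hz : ζ₈ = ((Real.sqrt 2 : ℝ) + (Real.sqrt 2 : ℝ) * Complex.I)/2 := by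
  rw [ζ₈, show ((Real.pi : ℂ) * Complex.I / 4 : ℂ) = ((Real.pi/4 : ℝ) : ℂ) * Complex.I by push_cast; ring,
    Complex.exp_mul_I, ← Complex.ofReal_cos, ← Complex.ofReal_sin,
    Real.cos_pi_div_four, Real.sin_pi_div_four]
  push_cast; ring

private lemma gc_hz2 : ζ₈ * ζ₈ = Complex.I := by
  rw [gc_hz]
  have h2c : ((Real.sqrt 2 : ℝ) : ℂ) * ((Real.sqrt 2 : ℝ) : ℂ) = 2 := by
    norm_cast
    exact Real.mul_self_sqrt (by norm_num)
  linear_combination ((1+Complex.I)^2/4) * h2c + (1/2) * Complex.I_mul_I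


set_option maxHeartbeats 4000000 in
private lemma gc_coreZ : ∀ (N : ℕ), ∀ a0r a0i a1r a1i b0r b0i b1r b1i c0r c0i c1r c1i d0r d0i d1r d1i : ℤ,
    (a0r^2 + a0i^2 + a1r^2 + a1i^2 + b0r^2 + b0i^2 + b1r^2 + b1i^2 + c0r^2 + c0i^2 + c1r^2 + c1i^2 + d0r^2 + d0i^2 + d1r^2 + d1i^2) ≤ (N:ℤ) →
    (-a0i*a0i - a0i*b0i + a0r*a0r + a0r*b0r - 2*a1i*a1r - a1i*b1r - a1r*b1i + b0i*b0i - b0r*b0r + 2*b1i*b1r + 2*c0i*c1r + c0i*d1r + 2*c0r*c1i + c0r*d1i + c1i*d0r + c1r*d0i - 2*d0i*d1r - 2*d0r*d1i) = 0 →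
    (2*a0i*a0r + a0i*b0r + a0r*b0i - a1i*a1i - a1i*b1i + a1r*a1r + a1r*b1r - 2*b0i*b0r + b1i*b1i - b1r*b1r + 2*c0i*c1i + c0i*d1i - 2*c0r*c1r - c0r*d1r + c1i*d0i - c1r*d0r - 2*d0i*d1i + 2*d0r*d1r) = 0 →
    (-2*a0i*a1i - a0i*b1i + 2*a0r*a1r + a0r*b1r - a1i*b0i + a1r*b0r + 2*b0i*b1i - 2*b0r*b1r + c0i*c0i + c0i*d0i - c0r*c0r - c0r*d0r + 2*c1i*c1r + c1i*d1r + c1r*d1i - d0i*d0i + d0r*d0r - 2*d1i*d1r) = 0 →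
    (2*a0i*a1r + a0i*b1r + 2*a0r*a1i + a0r*b1i + a1i*b0r + a1r*b0i - 2*b0i*b1r - 2*b0r*b1i - 2*c0i*c0r - c0i*d0r - c0r*d0i + c1i*c1i + c1i*d1i - c1r*c1r - c1r*d1r + 2*d0i*d0r - d1i*d1i + d1r*d1r) = 0 →
    (a0r = 0 ∧ a0i = 0 ∧ a1r = 0 ∧ a1i = 0 ∧ b0r = 0 ∧ b0i = 0 ∧ b1r = 0 ∧ b1i = 0 ∧ c0r = 0 ∧ c0i = 0 ∧ c1r = 0 ∧ c1i = 0 ∧ d0r = 0 ∧ d0i = 0 ∧ d1r = 0 ∧ d1i = 0) := by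
  intro N
  induction N with
  | zero =>
    intro a0r a0i a1r a1i b0r b0i b1r b1i c0r c0i c1r c1i d0r d0i d1r d1i hm hA hB hC hD
    rw [Nat.cast_zero] at hm
    exact ⟨gc_sqz a0r (by linarith [sq_nonneg a0i, sq_nonneg a1r, sq_nonneg a1i, sq_nonneg b0r, sq_nonneg b0i, sq_nonneg b1r, sq_nonneg b1i, sq_nonneg c0r, sq_nonneg c0i, sq_nonneg c1r, sq_nonneg c1i, sq_nonneg d0r, sq_nonneg d0i, sq_nonneg d1r, sq_nonneg d1i]), gc_sqz a0i (by linarith [sq_nonneg a0r, sq_nonneg a1r, sq_nonneg a1i, sq_nonneg b0r, sq_nonneg b0i, sq_nonneg b1r, sq_nonneg b1i, sq_nonneg c0r, sq_nonneg c0i, sq_nonneg c1r, sq_nonneg c1i, sq_nonneg d0r, sq_nonneg d0i, sq_nonneg d1r, sq_nonneg d1i]), gc_sqz a1r (by linarith [sq_nonneg a0r, sq_nonneg a0i, sq_nonneg a1i, sq_nonneg b0r, sq_nonneg b0i, sq_nonneg b1r, sq_nonneg b1i, sq_nonneg c0r, sq_nonneg c0i, sq_nonneg c1r, sq_nonneg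 c1i, sq_nonneg d0r, sq_nonneg d0i, sq_nonneg d1r, sq_nonneg d1i]), gc_sqz a1i (by linarith [sq_nonneg a0r, sq_nonneg a0i, sq_nonneg a1r, sq_nonneg b0r, sq_nonneg b0i, sq_nonneg b1r, sq_nonneg b1i, sq_nonneg c0r, sq_nonneg c0i, sq_nonneg c1r, sq_nonneg c1i, sq_nonneg d0r, sq_nonneg d0i, sq_nonneg d1r, sq_nonneg d1i]), gc_sqz b0r (by linarith [sq_nonneg a0r, sq_nonneg a0i, sq_nonneg a1r, sq_nonneg a1i, sq_nonneg b0i, sq_nonneg b1r, sq_nonneg b1i, sq_nonneg c0r, sq_nonneg c0i, sq_nonneg c1r, sq_nonneg c1i, sq_nonneg d0r, sq_nonneg d0i, sq_nonneg d1r, sq_nonneg d1i]), gc_sqz b0i (by linarith [sq_nonneg a0r, sq_nonneg a0i, sq_nonneg a1r, sq_nonneg a1i, sq_nonneg b0r, sq_nonneg b1r, sq_nonneg b1i, sq_nonneg c0r, sq_nonneg c0i, sq_nonneg c1r, sq_nonneg c1i, sq_nonneg d0r, sq_nonneg d0i, sq_nonneg d1r, sq_nonneg d1i]), gc_sqz b1r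 (by linarith [sq_nonneg a0r, sq_nonneg a0i, sq_nonneg a1r, sq_nonneg a1i, sq_nonneg b0r, sq_nonneg b0i, sq_nonneg b1i, sq_nonneg c0r, sq_nonneg c0i, sq_nonneg c1r, sq_nonneg c1i, sq_nonneg d0r, sq_nonneg d0i, sq_nonneg d1r, sq_nonneg d1i]), gc_sqz b1i (by linarith [sq_nonneg a0r, sq_nonneg a0i, sq_nonneg a1r, sq_nonneg a1i, sq_nonneg b0r, sq_nonneg b0i, sq_nonneg b1r, sq_nonneg c0r, sq_nonneg c0i, sq_nonneg c1r, sq_nonneg c1i, sq_nonneg d0r, sq_nonneg d0i, sq_nonneg d1r, sq_nonneg d1i]), gc_sqz c0r (by linarith [sq_nonneg a0r, sq_nonneg a0i, sq_nonneg a1r, sq_nonneg a1i, sq_nonneg b0r, sq_nonneg b0i, sq_nonneg b1r, sq_nonneg b1i, sq_nonneg c0i, sq_nonneg c1r, sq_nonneg c1i, sq_nonneg d0r, sq_nonneg d0i, sq_nonneg d1r, sq_nonneg d1i]), gc_sqz c0i (by linarith [sq_nonneg a0r, sq_nonneg a0i, sq_nonneg a1r, sq_nonneg a1i, sq_nonneg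 b0r, sq_nonneg b0i, sq_nonneg b1r, sq_nonneg b1i, sq_nonneg c0r, sq_nonneg c1r, sq_nonneg c1i, sq_nonneg d0r, sq_nonneg d0i, sq_nonneg d1r, sq_nonneg d1i]), gc_sqz c1r (by linarith [sq_nonneg a0r, sq_nonneg a0i, sq_nonneg a1r, sq_nonneg a1i, sq_nonneg b0r, sq_nonneg b0i, sq_nonneg b1r, sq_nonneg b1i, sq_nonneg c0r, sq_nonneg c0i, sq_nonneg c1i, sq_nonneg d0r, sq_nonneg d0i, sq_nonneg d1r, sq_nonneg d1i]), gc_sqz c1i (by linarith [sq_nonneg a0r, sq_nonneg a0i, sq_nonneg a1r, sq_nonneg a1i, sq_nonneg b0r, sq_nonneg b0i, sq_nonneg b1r, sq_nonneg b1i, sq_nonneg c0r, sq_nonneg c0i, sq_nonneg c1r, sq_nonneg d0r, sq_nonneg d0i, sq_nonneg d1r, sq_nonneg d1i]), gc_sqz d0r (by linarith [sq_nonneg a0r, sq_nonneg a0i, sq_nonneg a1r, sq_nonneg a1i, sq_nonneg b0r, sq_nonneg b0i, sq_nonneg b1r, sq_nonneg b1i, sq_nonneg c0r, sq_nonneg c0i,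 sq_nonneg c1r, sq_nonneg c1i, sq_nonneg d0i, sq_nonneg d1r, sq_nonneg d1i]), gc_sqz d0i (by linarith [sq_nonneg a0r, sq_nonneg a0i, sq_nonneg a1r, sq_nonneg a1i, sq_nonneg b0r, sq_nonneg b0i, sq_nonneg b1r, sq_nonneg b1i, sq_nonneg c0r, sq_nonneg c0i, sq_nonneg c1r, sq_nonneg c1i, sq_nonneg d0r, sq_nonneg d1r, sq_nonneg d1i]), gc_sqz d1r (by linarith [sq_nonneg a0r, sq_nonneg a0i, sq_nonneg a1r, sq_nonneg a1i, sq_nonneg b0r, sq_nonneg b0i, sq_nonneg b1r, sq_nonneg b1i, sq_nonneg c0r, sq_nonneg c0i, sq_nonneg c1r, sq_nonneg c1i, sq_nonneg d0r, sq_nonneg d0i, sq_nonneg d1i]), gc_sqz d1i (by linarith [sq_nonneg a0r, sq_nonneg a0i, sq_nonneg a1r, sq_nonneg a1i, sq_nonneg b0r, sq_nonneg b0i, sq_nonneg b1r, sq_nonneg b1i, sq_nonneg c0r, sq_nonneg c0i, sq_nonneg c1r, sq_nonneg c1i, sq_nonneg d0r, sq_nonneg d0i, sq_nonneg d1r])⟩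
  | succ N ih =>
    intro a0r a0i a1r a1i b0r b0i b1r b1i c0r c0i c1r c1i d0r d0i d1r d1i hm hA hB hC hD
    have h5 : (5 : ZMod 5) = 0 := by decide
    have m0 : (-((a0i : ZMod 5))*((a0i : ZMod 5)) - ((a0i : ZMod 5))*((b0i : ZMod 5)) + ((a0r : ZMod 5))*((a0r : ZMod 5)) + ((a0r : ZMod 5))*((b0r : ZMod 5)) - 2*((a1i : ZMod 5))*((a1r : ZMod 5)) - ((a1i : ZMod 5))*((b1r : ZMod 5)) - ((a1r : ZMod 5))*((b1i : ZMod 5)) + ((b0i : ZMod 5))*((b0i : ZMod 5)) - ((b0r : ZMod 5))*((b0r : ZMod 5)) + 2*((b1i : ZMod 5))*((b1r : ZMod 5)) + 2*((c0i : ZMod 5))*((c1r : ZMod 5)) + ((c0i : ZMod 5))*((d1r : ZMod 5)) + 2*((c0r : ZMod 5))*((c1i : ZMod 5)) + ((c0r : ZMod 5))*((d1i : ZMod 5)) + ((c1i : ZMod 5))*((d0r : ZMod 5)) + ((c1r : ZMod 5))*((d0i : ZMod 5)) - 2*((d0i : ZMod 5))*((d1r : ZMod 5)) - 2*((d0r :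 ZMod 5))*((d1i : ZMod 5))) = 0 := by
      have h := congrArg (fun t : ℤ => (t : ZMod 5)) hA
      push_cast at h
      linear_combination h
    have m1 : (2*((a0i : ZMod 5))*((a0r : ZMod 5)) + ((a0i : ZMod 5))*((b0r : ZMod 5)) + ((a0r : ZMod 5))*((b0i : ZMod 5)) - ((a1i : ZMod 5))*((a1i : ZMod 5)) - ((a1i : ZMod 5))*((b1i : ZMod 5)) + ((a1r : ZMod 5))*((a1r : ZMod 5)) + ((a1r : ZMod 5))*((b1r : ZMod 5)) - 2*((b0i : ZMod 5))*((b0r : ZMod 5)) + ((b1i : ZMod 5))*((b1i : ZMod 5)) - ((b1r : ZMod 5))*((b1r : ZMod 5)) + 2*((c0i : ZMod 5))*((c1i : ZMod 5)) + ((c0i : ZMod 5))*((d1i : ZMod 5)) - 2*((c0r : ZMod 5))*((c1r : ZMod 5)) - ((c0r : ZMod 5))*((d1r : ZMod 5)) + ((c1i : ZMod 5))*((d0i : ZMod 5)) - ((c1r : ZMod 5))*((d0r : ZMod 5)) - 2*((d0i : ZMod 5))*((d1i : ZMod 5)) + 2*((d0r : ZMod 5))*((d1r : ZMod 5))) = 0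 := by
      have h := congrArg (fun t : ℤ => (t : ZMod 5)) hB
      push_cast at h
      linear_combination h
    have m2 : (-2*((a0i : ZMod 5))*((a1i : ZMod 5)) - ((a0i : ZMod 5))*((b1i : ZMod 5)) + 2*((a0r : ZMod 5))*((a1r : ZMod 5)) + ((a0r : ZMod 5))*((b1r : ZMod 5)) - ((a1i : ZMod 5))*((b0i : ZMod 5)) + ((a1r : ZMod 5))*((b0r : ZMod 5)) + 2*((b0i : ZMod 5))*((b1i : ZMod 5)) - 2*((b0r : ZMod 5))*((b1r : ZMod 5)) + ((c0i : ZMod 5))*((c0i : ZMod 5)) + ((c0i : ZMod 5))*((d0i : ZMod 5)) - ((c0r : ZMod 5))*((c0r : ZMod 5)) - ((c0r : ZMod 5))*((d0r : ZMod 5)) + 2*((c1i : ZMod 5))*((c1r : ZMod 5)) + ((c1i : ZMod 5))*((d1r : ZMod 5)) + ((c1r : ZMod 5))*((d1i : ZMod 5)) - ((d0i : ZMod 5))*((d0i : ZMod 5)) + ((d0r : ZMod 5))*((d0r : ZMod 5)) - 2*((d1i : ZMod 5))*((d1r : ZMod 5))) = 0 := by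
      have h := congrArg (fun t : ℤ => (t : ZMod 5)) hC
      push_cast at h
      linear_combination h
    have m3 : (2*((a0i : ZMod 5))*((a1r : ZMod 5)) + ((a0i : ZMod 5))*((b1r : ZMod 5)) + 2*((a0r : ZMod 5))*((a1i : ZMod 5)) + ((a0r : ZMod 5))*((b1i : ZMod 5)) + ((a1i : ZMod 5))*((b0r : ZMod 5)) + ((a1r : ZMod 5))*((b0i : ZMod 5)) - 2*((b0i : ZMod 5))*((b1r : ZMod 5)) - 2*((b0r : ZMod 5))*((b1i : ZMod 5)) - 2*((c0i : ZMod 5))*((c0r : ZMod 5)) - ((c0i : ZMod 5))*((d0r : ZMod 5)) - ((c0r : ZMod 5))*((d0i : ZMod 5)) + ((c1i : ZMod 5))*((c1i : ZMod 5)) + ((c1i : ZMod 5))*((d1i : ZMod 5)) - ((c1r : ZMod 5))*((c1r : ZMod 5)) - ((c1r : ZMod 5))*((d1r : ZMod 5)) + 2*((d0i : ZMod 5))*((d0r : ZMod 5)) - ((d1i : ZMod 5))*((d1i : ZMod 5)) + ((d1r : ZMod 5))*((d1r : ZMod 5))) = 0 := by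
      have h := congrArg (fun t : ℤ => (t : ZMod 5)) hD
      push_cast at h
      linear_combination h
    obtain ⟨hx0, hx1, hy0, hy1⟩ := gc_L1 (((a0r : ZMod 5)) + 2*((a0i : ZMod 5)) + 3*((b0r : ZMod 5)) + 6*((b0i : ZMod 5))) (((a1r : ZMod 5)) + 2*((a1i : ZMod 5)) + 3*((b1r : ZMod 5)) + 6*((b1i : ZMod 5))) (((c0r : ZMod 5)) + 2*((c0i : ZMod 5)) + 3*((d0r : ZMod 5)) + 6*((d0i : ZMod 5))) (((c1r : ZMod 5)) + 2*((c1i : ZMod 5)) + 3*((d1r : ZMod 5)) + 6*((d1i : ZMod 5)))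
      (by linear_combination m0 + 2*m1 + (((a0i : ZMod 5))*((a0i : ZMod 5)) + 5*((a0i : ZMod 5))*((b0i : ZMod 5)) + 2*((a0i : ZMod 5))*((b0r : ZMod 5)) + 2*((a0r : ZMod 5))*((b0i : ZMod 5)) + ((a0r : ZMod 5))*((b0r : ZMod 5)) + 2*((a1i : ZMod 5))*((a1i : ZMod 5)) + 2*((a1i : ZMod 5))*((a1r : ZMod 5)) + 10*((a1i : ZMod 5))*((b1i : ZMod 5)) + 5*((a1i : ZMod 5))*((b1r : ZMod 5)) + 5*((a1r : ZMod 5))*((b1i : ZMod 5)) + 2*((a1r : ZMod 5))*((b1r : ZMod 5)) + 7*((b0i : ZMod 5))*((b0i : ZMod 5)) + 8*((b0i : ZMod 5))*((b0r : ZMod 5)) + 2*((b0r : ZMod 5))*((b0r : ZMod 5)) + 14*((b1i : ZMod 5))*((b1i : ZMod 5)) + 14*((b1i : ZMod 5))*((b1r : ZMod 5)) + 4*((b1r : ZMod 5))*((b1r : ZMod 5)) - 4*((c0i : ZMod 5))*((c1i : ZMod 5)) - 2*((c0i : ZMod 5))*((c1r : ZMod 5)) - 10*((c0i : ZMod 5))*((d1i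 : ZMod 5)) - 5*((c0i : ZMod 5))*((d1r : ZMod 5)) - 2*((c0r : ZMod 5))*((c1i : ZMod 5)) - 5*((c0r : ZMod 5))*((d1i : ZMod 5)) - 2*((c0r : ZMod 5))*((d1r : ZMod 5)) - 10*((c1i : ZMod 5))*((d0i : ZMod 5)) - 5*((c1i : ZMod 5))*((d0r : ZMod 5)) - 5*((c1r : ZMod 5))*((d0i : ZMod 5)) - 2*((c1r : ZMod 5))*((d0r : ZMod 5)) - 28*((d0i : ZMod 5))*((d1i : ZMod 5)) - 14*((d0i : ZMod 5))*((d1r : ZMod 5)) - 14*((d0r : ZMod 5))*((d1i : ZMod 5)) - 8*((d0r : ZMod 5))*((d1r : ZMod 5)))*h5)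
      (by linear_combination m2 + 2*m3 + (2*((a0i : ZMod 5))*((a1i : ZMod 5)) + 5*((a0i : ZMod 5))*((b1i : ZMod 5)) + 2*((a0i : ZMod 5))*((b1r : ZMod 5)) + 2*((a0r : ZMod 5))*((b1i : ZMod 5)) + ((a0r : ZMod 5))*((b1r : ZMod 5)) + 5*((a1i : ZMod 5))*((b0i : ZMod 5)) + 2*((a1i : ZMod 5))*((b0r : ZMod 5)) + 2*((a1r : ZMod 5))*((b0i : ZMod 5)) + ((a1r : ZMod 5))*((b0r : ZMod 5)) + 14*((b0i : ZMod 5))*((b1i : ZMod 5)) + 8*((b0i : ZMod 5))*((b1r : ZMod 5)) + 8*((b0r : ZMod 5))*((b1i : ZMod 5)) + 4*((b0r : ZMod 5))*((b1r : ZMod 5)) - ((c0i : ZMod 5))*((c0i : ZMod 5)) - 5*((c0i : ZMod 5))*((d0i : ZMod 5)) - 2*((c0i : ZMod 5))*((d0r : ZMod 5)) - 2*((c0r : ZMod 5))*((d0i : ZMod 5)) - ((c0r : ZMod 5))*((d0r : ZMod 5)) - 2*((c1i : ZMod 5))*((c1i : ZMod 5)) - 2*((c1i : ZMod 5))*((c1r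 : ZMod 5)) - 10*((c1i : ZMod 5))*((d1i : ZMod 5)) - 5*((c1i : ZMod 5))*((d1r : ZMod 5)) - 5*((c1r : ZMod 5))*((d1i : ZMod 5)) - 2*((c1r : ZMod 5))*((d1r : ZMod 5)) - 7*((d0i : ZMod 5))*((d0i : ZMod 5)) - 8*((d0i : ZMod 5))*((d0r : ZMod 5)) - 2*((d0r : ZMod 5))*((d0r : ZMod 5)) - 14*((d1i : ZMod 5))*((d1i : ZMod 5)) - 14*((d1i : ZMod 5))*((d1r : ZMod 5)) - 4*((d1r : ZMod 5))*((d1r : ZMod 5)))*h5)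
    obtain ⟨e0r, e0i, hp1, hp2⟩ := gc_pidiv (a0r + 3*b0r) (a0i + 3*b0i) (by push_cast; linear_combination hx0)
    have hs1 : a0r = 2*e0r + e0i - 3*b0r := by linarith [hp1]
    have hs2 : a0i = 2*e0i - e0r - 3*b0i := by linarith [hp2]
    subst hs1; subst hs2; clear hp1 hp2
    obtain ⟨e1r, e1i, hp1, hp2⟩ := gc_pidiv (a1r + 3*b1r) (a1i + 3*b1i) (by push_cast; linear_combination hx1)
    have hs1 : a1r = 2*e1r + e1i - 3*b1r := by linarith [hp1]
    have hs2 : a1i = 2*e1i - e1r - 3*b1i := by linarith [hp2]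
    subst hs1; subst hs2; clear hp1 hp2
    obtain ⟨f0r, f0i, hp1, hp2⟩ := gc_pidiv (c0r + 3*d0r) (c0i + 3*d0i) (by push_cast; linear_combination hy0)
    have hs1 : c0r = 2*f0r + f0i - 3*d0r := by linarith [hp1]
    have hs2 : c0i = 2*f0i - f0r - 3*d0i := by linarith [hp2]
    subst hs1; subst hs2; clear hp1 hp2
    obtain ⟨f1r, f1i, hp1, hp2⟩ := gc_pidiv (c1r + 3*d1r) (c1i + 3*d1i) (by push_cast; linear_combination hy1)
    have hs1 : c1r = 2*f1r + f1i - 3*d1r := by linarith [hp1]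
    have hs2 : c1i = 2*f1i - f1r - 3*d1i := by linarith [hp2]
    subst hs1; subst hs2; clear hp1 hp2
    have sA : (-2*b0i*b0i - 2*b0i*b0r + 5*b0i*e0i + 2*b0r*b0r - 5*b0r*e0r + b1i*b1i - 4*b1i*b1r + 5*b1i*e1r - b1r*b1r + 5*b1r*e1i - 2*d0i*d1i + 4*d0i*d1r - 5*d0i*f1r + 4*d0r*d1i + 2*d0r*d1r - 5*d0r*f1i - 5*d1i*f0r - 5*d1r*f0i - 2*e0i*e0i + 2*e0i*e0r + 2*e0r*e0r - e1i*e1i - 4*e1i*e1r + e1r*e1r + 2*f0i*f1i + 4*f0i*f1r + 4*f0r*f1i - 2*f0r*f1r) = 0 := by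
      have h25 : (5:ℤ) * (-2*b0i*b0i - 2*b0i*b0r + 5*b0i*e0i + 2*b0r*b0r - 5*b0r*e0r + b1i*b1i - 4*b1i*b1r + 5*b1i*e1r - b1r*b1r + 5*b1r*e1i - 2*d0i*d1i + 4*d0i*d1r - 5*d0i*f1r + 4*d0r*d1i + 2*d0r*d1r - 5*d0r*f1i - 5*d1i*f0r - 5*d1r*f0i - 2*e0i*e0i + 2*e0i*e0r + 2*e0r*e0r - e1i*e1i - 4*e1i*e1r + e1r*e1r + 2*f0i*f1i + 4*f0i*f1r + 4*f0r*f1i - 2*f0r*f1r) = 0 := by linear_combination 2*hA - hB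
      exact (mul_eq_zero.mp h25).resolve_left (by norm_num)
    have sB : (-b0i*b0i + 4*b0i*b0r - 5*b0i*e0r + b0r*b0r - 5*b0r*e0i - 2*b1i*b1i - 2*b1i*b1r + 5*b1i*e1i + 2*b1r*b1r - 5*b1r*e1r + 4*d0i*d1i + 2*d0i*d1r - 5*d0i*f1i + 2*d0r*d1i - 4*d0r*d1r + 5*d0r*f1r - 5*d1i*f0i + 5*d1r*f0r + e0i*e0i + 4*e0i*e0r - e0r*e0r - 2*e1i*e1i + 2*e1i*e1r + 2*e1r*e1r + 4*f0i*f1i - 2*f0i*f1r - 2*f0r*f1i - 4*f0r*f1r) = 0 := by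
      have h25 : (5:ℤ) * (-b0i*b0i + 4*b0i*b0r - 5*b0i*e0r + b0r*b0r - 5*b0r*e0i - 2*b1i*b1i - 2*b1i*b1r + 5*b1i*e1i + 2*b1r*b1r - 5*b1r*e1r + 4*d0i*d1i + 2*d0i*d1r - 5*d0i*f1i + 2*d0r*d1i - 4*d0r*d1r + 5*d0r*f1r - 5*d1i*f0i + 5*d1r*f0r + e0i*e0i + 4*e0i*e0r - e0r*e0r - 2*e1i*e1i + 2*e1i*e1r + 2*e1r*e1r + 4*f0i*f1i - 2*f0i*f1r - 2*f0r*f1i - 4*f0r*f1r) = 0 := by linear_combination hA + 2*hB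
      exact (mul_eq_zero.mp h25).resolve_left (by norm_num)
    have sC : (-4*b0i*b1i - 2*b0i*b1r + 5*b0i*e1i - 2*b0r*b1i + 4*b0r*b1r - 5*b0r*e1r + 5*b1i*e0i - 5*b1r*e0r + 2*d0i*d0i + 2*d0i*d0r - 5*d0i*f0i - 2*d0r*d0r + 5*d0r*f0r - d1i*d1i + 4*d1i*d1r - 5*d1i*f1r + d1r*d1r - 5*d1r*f1i - 4*e0i*e1i + 2*e0i*e1r + 2*e0r*e1i + 4*e0r*e1r + 2*f0i*f0i - 2*f0i*f0r - 2*f0r*f0r + f1i*f1i + 4*f1i*f1r - f1r*f1r) = 0 := by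
      have h25 : (5:ℤ) * (-4*b0i*b1i - 2*b0i*b1r + 5*b0i*e1i - 2*b0r*b1i + 4*b0r*b1r - 5*b0r*e1r + 5*b1i*e0i - 5*b1r*e0r + 2*d0i*d0i + 2*d0i*d0r - 5*d0i*f0i - 2*d0r*d0r + 5*d0r*f0r - d1i*d1i + 4*d1i*d1r - 5*d1i*f1r + d1r*d1r - 5*d1r*f1i - 4*e0i*e1i + 2*e0i*e1r + 2*e0r*e1i + 4*e0r*e1r + 2*f0i*f0i - 2*f0i*f0r - 2*f0r*f0r + f1i*f1i + 4*f1i*f1r - f1r*f1r) = 0 := by linear_combination 2*hC - hD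
      exact (mul_eq_zero.mp h25).resolve_left (by norm_num)
    have sD : (-2*b0i*b1i + 4*b0i*b1r - 5*b0i*e1r + 4*b0r*b1i + 2*b0r*b1r - 5*b0r*e1i - 5*b1i*e0r - 5*b1r*e0i + d0i*d0i - 4*d0i*d0r + 5*d0i*f0r - d0r*d0r + 5*d0r*f0i + 2*d1i*d1i + 2*d1i*d1r - 5*d1i*f1i - 2*d1r*d1r + 5*d1r*f1r + 2*e0i*e1i + 4*e0i*e1r + 4*e0r*e1i - 2*e0r*e1r - f0i*f0i - 4*f0i*f0r + f0r*f0r + 2*f1i*f1i - 2*f1i*f1r - 2*f1r*f1r) = 0 := by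
      have h25 : (5:ℤ) * (-2*b0i*b1i + 4*b0i*b1r - 5*b0i*e1r + 4*b0r*b1i + 2*b0r*b1r - 5*b0r*e1i - 5*b1i*e0r - 5*b1r*e0i + d0i*d0i - 4*d0i*d0r + 5*d0i*f0r - d0r*d0r + 5*d0r*f0i + 2*d1i*d1i + 2*d1i*d1r - 5*d1i*f1i - 2*d1r*d1r + 5*d1r*f1r + 2*e0i*e1i + 4*e0i*e1r + 4*e0r*e1i - 2*e0r*e1r - f0i*f0i - 4*f0i*f0r + f0r*f0r + 2*f1i*f1i - 2*f1i*f1r - 2*f1r*f1r) = 0 := by linear_combination hC + 2*hD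
      exact (mul_eq_zero.mp h25).resolve_left (by norm_num)
    obtain ⟨hb0, hb1, hd0, hd1⟩ := gc_L1 (((b0r : ZMod 5)) + 2*((b0i : ZMod 5))) (((b1r : ZMod 5)) + 2*((b1i : ZMod 5))) (((d0r : ZMod 5)) + 2*((d0i : ZMod 5))) (((d1r : ZMod 5)) + 2*((d1i : ZMod 5)))
      (by
        have u1 := congrArg (fun t : ℤ => (t : ZMod 5)) sA
        have u2 := congrArg (fun t : ℤ => (t : ZMod 5)) sB
        push_cast at u1 u2
        linear_combination 4*u1 + 8*u2 + (4*((b0i : ZMod 5))*((b0i : ZMod 5)) - 4*((b0i : ZMod 5))*((b0r : ZMod 5)) - 4*((b0i : ZMod 5))*((e0i : ZMod 5)) + 8*((b0i : ZMod 5))*((e0r : ZMod 5)) - 3*((b0r : ZMod 5))*((b0r : ZMod 5)) + 8*((b0r : ZMod 5))*((e0i : ZMod 5)) + 4*((b0r : ZMod 5))*((e0r : ZMod 5)) + 4*((b1i : ZMod 5))*((b1i : ZMod 5)) + 8*((b1i : ZMod 5))*((b1r : ZMod 5)) - 8*((b1i : ZMod 5))*((e1i : ZMod 5)) - 4*((b1i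 : ZMod 5))*((e1r : ZMod 5)) - 2*((b1r : ZMod 5))*((b1r : ZMod 5)) - 4*((b1r : ZMod 5))*((e1i : ZMod 5)) + 8*((b1r : ZMod 5))*((e1r : ZMod 5)) - 8*((d0i : ZMod 5))*((d1i : ZMod 5)) - 8*((d0i : ZMod 5))*((d1r : ZMod 5)) + 8*((d0i : ZMod 5))*((f1i : ZMod 5)) + 4*((d0i : ZMod 5))*((f1r : ZMod 5)) - 8*((d0r : ZMod 5))*((d1i : ZMod 5)) + 4*((d0r : ZMod 5))*((d1r : ZMod 5)) + 4*((d0r : ZMod 5))*((f1i : ZMod 5)) - 8*((d0r : ZMod 5))*((f1r : ZMod 5)) + 8*((d1i : ZMod 5))*((f0i : ZMod 5)) + 4*((d1i : ZMod 5))*((f0r : ZMod 5)) + 4*((d1r : ZMod 5))*((f0i : ZMod 5)) - 8*((d1r : ZMod 5))*((f0r : ZMod 5)) - 8*((e0i : ZMod 5))*((e0r : ZMod 5)) + 4*((e1i : ZMod 5))*((e1i : ZMod 5)) - 4*((e1r : ZMod 5))*((e1r : ZMod 5)) - 8*((f0i : ZMod 5))*((f1i : ZMod 5)) + 8*((f0r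 : ZMod 5))*((f1r : ZMod 5)))*h5)
      (by
        have u1 := congrArg (fun t : ℤ => (t : ZMod 5)) sC
        have u2 := congrArg (fun t : ℤ => (t : ZMod 5)) sD
        push_cast at u1 u2
        linear_combination 4*u1 + 8*u2 + (8*((b0i : ZMod 5))*((b1i : ZMod 5)) - 4*((b0i : ZMod 5))*((b1r : ZMod 5)) - 4*((b0i : ZMod 5))*((e1i : ZMod 5)) + 8*((b0i : ZMod 5))*((e1r : ZMod 5)) - 4*((b0r : ZMod 5))*((b1i : ZMod 5)) - 6*((b0r : ZMod 5))*((b1r : ZMod 5)) + 8*((b0r : ZMod 5))*((e1i : ZMod 5)) + 4*((b0r : ZMod 5))*((e1r : ZMod 5)) - 4*((b1i : ZMod 5))*((e0i : ZMod 5)) + 8*((b1i : ZMod 5))*((e0r : ZMod 5)) + 8*((b1r : ZMod 5))*((e0i : ZMod 5)) + 4*((b1r : ZMod 5))*((e0r : ZMod 5)) - 4*((d0i : ZMod 5))*((d0i : ZMod 5)) + 4*((d0i : ZMod 5))*((d0r : ZMod 5)) + 4*((d0i : ZMod 5))*((f0i : ZMod 5)) - 8*((d0i : ZMod 5))*((f0r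 : ZMod 5)) + 3*((d0r : ZMod 5))*((d0r : ZMod 5)) - 8*((d0r : ZMod 5))*((f0i : ZMod 5)) - 4*((d0r : ZMod 5))*((f0r : ZMod 5)) - 4*((d1i : ZMod 5))*((d1i : ZMod 5)) - 8*((d1i : ZMod 5))*((d1r : ZMod 5)) + 8*((d1i : ZMod 5))*((f1i : ZMod 5)) + 4*((d1i : ZMod 5))*((f1r : ZMod 5)) + 2*((d1r : ZMod 5))*((d1r : ZMod 5)) + 4*((d1r : ZMod 5))*((f1i : ZMod 5)) - 8*((d1r : ZMod 5))*((f1r : ZMod 5)) - 8*((e0i : ZMod 5))*((e1r : ZMod 5)) - 8*((e0r : ZMod 5))*((e1i : ZMod 5)) + 8*((f0i : ZMod 5))*((f0r : ZMod 5)) - 4*((f1i : ZMod 5))*((f1i : ZMod 5)) + 4*((f1r : ZMod 5))*((f1r : ZMod 5)))*h5)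
    obtain ⟨g0r, g0i, hp1, hp2⟩ := gc_pidiv b0r b0i hb0
    have ht1 : b0r = 2*g0r + g0i := by linarith [hp1]
    have ht2 : b0i = 2*g0i - g0r := by linarith [hp2]
    subst ht1; subst ht2; clear hp1 hp2
    obtain ⟨g1r, g1i, hp1, hp2⟩ := gc_pidiv b1r b1i hb1
    have ht1 : b1r = 2*g1r + g1i := by linarith [hp1]
    have ht2 : b1i = 2*g1i - g1r := by linarith [hp2]
    subst ht1; subst ht2; clear hp1 hp2
    obtain ⟨k0r, k0i, hp1, hp2⟩ := gc_pidiv d0r d0i hd0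
    have ht1 : d0r = 2*k0r + k0i := by linarith [hp1]
    have ht2 : d0i = 2*k0i - k0r := by linarith [hp2]
    subst ht1; subst ht2; clear hp1 hp2
    obtain ⟨k1r, k1i, hp1, hp2⟩ := gc_pidiv d1r d1i hd1
    have ht1 : d1r = 2*k1r + k1i := by linarith [hp1]
    have ht2 : d1i = 2*k1i - k1r := by linarith [hp2]
    subst ht1; subst ht2; clear hp1 hp2
    have pA : (-(e0i - 3*g0i)*(e0i - 3*g0i) - (e0i - 3*g0i)*g0i + (e0r - 3*g0r)*(e0r - 3*g0r) + (e0r - 3*g0r)*g0r - 2*(e1i - 3*g1i)*(e1r - 3*g1r) - (e1i - 3*g1i)*g1r - (e1r - 3*g1r)*g1i + g0i*g0i - g0r*g0r + 2*g1i*g1r + 2*(f0i - 3*k0i)*(f1r - 3*k1r) + (f0i - 3*k0i)*k1r + 2*(f0r - 3*k0r)*(f1i - 3*k1i) + (f0r - 3*k0r)*k1i + (f1i - 3*k1i)*k0r + (f1r - 3*k1r)*k0i - 2*k0i*k1r - 2*k0r*k1i) = 0 := by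
      have h25 : (25:ℤ) * (-(e0i - 3*g0i)*(e0i - 3*g0i) - (e0i - 3*g0i)*g0i + (e0r - 3*g0r)*(e0r - 3*g0r) + (e0r - 3*g0r)*g0r - 2*(e1i - 3*g1i)*(e1r - 3*g1r) - (e1i - 3*g1i)*g1r - (e1r - 3*g1r)*g1i + g0i*g0i - g0r*g0r + 2*g1i*g1r + 2*(f0i - 3*k0i)*(f1r - 3*k1r) + (f0i - 3*k0i)*k1r + 2*(f0r - 3*k0r)*(f1i - 3*k1i) + (f0r - 3*k0r)*k1i + (f1i - 3*k1i)*k0r + (f1r - 3*k1r)*k0i - 2*k0i*k1r - 2*k0r*k1i) = 0 := by linear_combination 3*hA - 4*hB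
      exact (mul_eq_zero.mp h25).resolve_left (by norm_num)
    have pB : (2*(e0i - 3*g0i)*(e0r - 3*g0r) + (e0i - 3*g0i)*g0r + (e0r - 3*g0r)*g0i - (e1i - 3*g1i)*(e1i - 3*g1i) - (e1i - 3*g1i)*g1i + (e1r - 3*g1r)*(e1r - 3*g1r) + (e1r - 3*g1r)*g1r - 2*g0i*g0r + g1i*g1i - g1r*g1r + 2*(f0i - 3*k0i)*(f1i - 3*k1i) + (f0i - 3*k0i)*k1i - 2*(f0r - 3*k0r)*(f1r - 3*k1r) - (f0r - 3*k0r)*k1r + (f1i - 3*k1i)*k0i - (f1r - 3*k1r)*k0r - 2*k0i*k1i + 2*k0r*k1r) = 0 := by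
      have h25 : (25:ℤ) * (2*(e0i - 3*g0i)*(e0r - 3*g0r) + (e0i - 3*g0i)*g0r + (e0r - 3*g0r)*g0i - (e1i - 3*g1i)*(e1i - 3*g1i) - (e1i - 3*g1i)*g1i + (e1r - 3*g1r)*(e1r - 3*g1r) + (e1r - 3*g1r)*g1r - 2*g0i*g0r + g1i*g1i - g1r*g1r + 2*(f0i - 3*k0i)*(f1i - 3*k1i) + (f0i - 3*k0i)*k1i - 2*(f0r - 3*k0r)*(f1r - 3*k1r) - (f0r - 3*k0r)*k1r + (f1i - 3*k1i)*k0i - (f1r - 3*k1r)*k0r - 2*k0i*k1i + 2*k0r*k1r) = 0 := by linear_combination 4*hA + 3*hB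
      exact (mul_eq_zero.mp h25).resolve_left (by norm_num)
    have pC : (-2*(e0i - 3*g0i)*(e1i - 3*g1i) - (e0i - 3*g0i)*g1i + 2*(e0r - 3*g0r)*(e1r - 3*g1r) + (e0r - 3*g0r)*g1r - (e1i - 3*g1i)*g0i + (e1r - 3*g1r)*g0r + 2*g0i*g1i - 2*g0r*g1r + (f0i - 3*k0i)*(f0i - 3*k0i) + (f0i - 3*k0i)*k0i - (f0r - 3*k0r)*(f0r - 3*k0r) - (f0r - 3*k0r)*k0r + 2*(f1i - 3*k1i)*(f1r - 3*k1r) + (f1i - 3*k1i)*k1r + (f1r - 3*k1r)*k1i - k0i*k0i + k0r*k0r - 2*k1i*k1r) = 0 := by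
      have h25 : (25:ℤ) * (-2*(e0i - 3*g0i)*(e1i - 3*g1i) - (e0i - 3*g0i)*g1i + 2*(e0r - 3*g0r)*(e1r - 3*g1r) + (e0r - 3*g0r)*g1r - (e1i - 3*g1i)*g0i + (e1r - 3*g1r)*g0r + 2*g0i*g1i - 2*g0r*g1r + (f0i - 3*k0i)*(f0i - 3*k0i) + (f0i - 3*k0i)*k0i - (f0r - 3*k0r)*(f0r - 3*k0r) - (f0r - 3*k0r)*k0r + 2*(f1i - 3*k1i)*(f1r - 3*k1r) + (f1i - 3*k1i)*k1r + (f1r - 3*k1r)*k1i - k0i*k0i + k0r*k0r - 2*k1i*k1r) = 0 := by linear_combination 3*hC - 4*hD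
      exact (mul_eq_zero.mp h25).resolve_left (by norm_num)
    have pD : (2*(e0i - 3*g0i)*(e1r - 3*g1r) + (e0i - 3*g0i)*g1r + 2*(e0r - 3*g0r)*(e1i - 3*g1i) + (e0r - 3*g0r)*g1i + (e1i - 3*g1i)*g0r + (e1r - 3*g1r)*g0i - 2*g0i*g1r - 2*g0r*g1i - 2*(f0i - 3*k0i)*(f0r - 3*k0r) - (f0i - 3*k0i)*k0r - (f0r - 3*k0r)*k0i + (f1i - 3*k1i)*(f1i - 3*k1i) + (f1i - 3*k1i)*k1i - (f1r - 3*k1r)*(f1r - 3*k1r) - (f1r - 3*k1r)*k1r + 2*k0i*k0r - k1i*k1i + k1r*k1r) = 0 := by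
      have h25 : (25:ℤ) * (2*(e0i - 3*g0i)*(e1r - 3*g1r) + (e0i - 3*g0i)*g1r + 2*(e0r - 3*g0r)*(e1i - 3*g1i) + (e0r - 3*g0r)*g1i + (e1i - 3*g1i)*g0r + (e1r - 3*g1r)*g0i - 2*g0i*g1r - 2*g0r*g1i - 2*(f0i - 3*k0i)*(f0r - 3*k0r) - (f0i - 3*k0i)*k0r - (f0r - 3*k0r)*k0i + (f1i - 3*k1i)*(f1i - 3*k1i) + (f1i - 3*k1i)*k1i - (f1r - 3*k1r)*(f1r - 3*k1r) - (f1r - 3*k1r)*k1r + 2*k0i*k0r - k1i*k1i + k1r*k1r) = 0 := by linear_combination 4*hC + 3*hD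
      exact (mul_eq_zero.mp h25).resolve_left (by norm_num)
    have hmp : ((e0r - 3*g0r)^2 + (e0i - 3*g0i)^2 + (e1r - 3*g1r)^2 + (e1i - 3*g1i)^2 + g0r^2 + g0i^2 + g1r^2 + g1i^2 + (f0r - 3*k0r)^2 + (f0i - 3*k0i)^2 + (f1r - 3*k1r)^2 + (f1i - 3*k1i)^2 + k0r^2 + k0i^2 + k1r^2 + k1i^2) ≤ (N:ℤ) := by
      have hq : 5 * ((e0r - 3*g0r)^2 + (e0i - 3*g0i)^2 + (e1r - 3*g1r)^2 + (e1i - 3*g1i)^2 + g0r^2 + g0i^2 + g1r^2 + g1i^2 + (f0r - 3*k0r)^2 + (f0i - 3*k0i)^2 + (f1r - 3*k1r)^2 + (f1i - 3*k1i)^2 + k0r^2 + k0i^2 + k1r^2 + k1i^2) ≤ (N:ℤ) + 1 := by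
        push_cast at hm
        linarith [hm]
      have hnn : 0 ≤ ((e0r - 3*g0r)^2 + (e0i - 3*g0i)^2 + (e1r - 3*g1r)^2 + (e1i - 3*g1i)^2 + g0r^2 + g0i^2 + g1r^2 + g1i^2 + (f0r - 3*k0r)^2 + (f0i - 3*k0i)^2 + (f1r - 3*k1r)^2 + (f1i - 3*k1i)^2 + k0r^2 + k0i^2 + k1r^2 + k1i^2) := by positivity
      by_contra hc
      push_neg at hc
      have hc' : (N:ℤ) + 1 ≤ ((e0r - 3*g0r)^2 + (e0i - 3*g0i)^2 + (e1r - 3*g1r)^2 + (e1i - 3*g1i)^2 + g0r^2 + g0i^2 + g1r^2 + g1i^2 + (f0r - 3*k0r)^2 + (f0i - 3*k0i)^2 + (f1r - 3*k1r)^2 + (f1i - 3*k1i)^2 + k0r^2 + k0i^2 + k1r^2 + k1i^2) := Int.lt_iff_add_one_le.mp hc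
      linarith
    obtain ⟨q1, q2, q3, q4, q5, q6, q7, q8, q9, q10, q11, q12, q13, q14, q15, q16⟩ := ih (e0r - 3*g0r) (e0i - 3*g0i) (e1r - 3*g1r) (e1i - 3*g1i) g0r g0i g1r g1i (f0r - 3*k0r) (f0i - 3*k0i) (f1r - 3*k1r) (f1i - 3*k1i) k0r k0i k1r k1i hmp pA pB pC pD
    refine ⟨by linarith, by linarith, by linarith, by linarith, by linarith, by linarith, by linarith, by linarith, by linarith, by linarith, by linarith, by linarith, by linarith, by linarith, by linarith, by linarith⟩

private lemma gc_coreZ' (a0r a0i a1r a1i b0r b0i b1r b1i c0r c0i c1r c1i d0r d0i d1r d1i : ℤ)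
    (h0 : (-a0i*a0i - a0i*b0i + a0r*a0r + a0r*b0r - 2*a1i*a1r - a1i*b1r - a1r*b1i + b0i*b0i - b0r*b0r + 2*b1i*b1r + 2*c0i*c1r + c0i*d1r + 2*c0r*c1i + c0r*d1i + c1i*d0r + c1r*d0i - 2*d0i*d1r - 2*d0r*d1i) = 0)
    (h1 : (2*a0i*a0r + a0i*b0r + a0r*b0i - a1i*a1i - a1i*b1i + a1r*a1r + a1r*b1r - 2*b0i*b0r + b1i*b1i - b1r*b1r + 2*c0i*c1i + c0i*d1i - 2*c0r*c1r - c0r*d1r + c1i*d0i - c1r*d0r - 2*d0i*d1i + 2*d0r*d1r) = 0)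
    (h2 : (-2*a0i*a1i - a0i*b1i + 2*a0r*a1r + a0r*b1r - a1i*b0i + a1r*b0r + 2*b0i*b1i - 2*b0r*b1r + c0i*c0i + c0i*d0i - c0r*c0r - c0r*d0r + 2*c1i*c1r + c1i*d1r + c1r*d1i - d0i*d0i + d0r*d0r - 2*d1i*d1r) = 0)
    (h3 : (2*a0i*a1r + a0i*b1r + 2*a0r*a1i + a0r*b1i + a1i*b0r + a1r*b0i - 2*b0i*b1r - 2*b0r*b1i - 2*c0i*c0r - c0i*d0r - c0r*d0i + c1i*c1i + c1i*d1i - c1r*c1r - c1r*d1r + 2*d0i*d0r - d1i*d1i + d1r*d1r) = 0)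
    : (a0r = 0 ∧ a0i = 0 ∧ a1r = 0 ∧ a1i = 0 ∧ b0r = 0 ∧ b0i = 0 ∧ b1r = 0 ∧ b1i = 0 ∧ c0r = 0 ∧ c0i = 0 ∧ c1r = 0 ∧ c1i = 0 ∧ d0r = 0 ∧ d0i = 0 ∧ d1r = 0 ∧ d1i = 0) :=
  gc_coreZ (a0r^2 + a0i^2 + a1r^2 + a1i^2 + b0r^2 + b0i^2 + b1r^2 + b1i^2 + c0r^2 + c0i^2 + c1r^2 + c1i^2 + d0r^2 + d0i^2 + d1r^2 + d1i^2).toNat a0r a0i a1r a1i b0r b0i b1r b1i c0r c0i c1r c1i d0r d0i d1r d1i (by exact_mod_cast Int.self_le_toNat _) h0 h1 h2 h3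

private lemma gc_coreQ (pa0 qa0 pa1 qa1 pa2 qa2 pa3 qa3 pb0 qb0 pb1 qb1 pb2 qb2 pb3 qb3 : ℚ)
    (h0 : (-qa0*qa0 - qa0*qa2 + pa0*pa0 + pa0*pa2 - 2*qa1*pa1 - qa1*pa3 - pa1*qa3 + qa2*qa2 - pa2*pa2 + 2*qa3*pa3 + 2*qb0*pb1 + qb0*pb3 + 2*pb0*qb1 + pb0*qb3 + qb1*pb2 + pb1*qb2 - 2*qb2*pb3 - 2*pb2*qb3) = 0)
    (h1 : (2*qa0*pa0 + qa0*pa2 + pa0*qa2 - qa1*qa1 - qa1*qa3 + pa1*pa1 + pa1*pa3 - 2*qa2*pa2 + qa3*qa3 - pa3*pa3 + 2*qb0*qb1 + qb0*qb3 - 2*pb0*pb1 - pb0*pb3 + qb1*qb2 - pb1*pb2 - 2*qb2*qb3 + 2*pb2*pb3) = 0)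
    (h2 : (-2*qa0*qa1 - qa0*qa3 + 2*pa0*pa1 + pa0*pa3 - qa1*qa2 + pa1*pa2 + 2*qa2*qa3 - 2*pa2*pa3 + qb0*qb0 + qb0*qb2 - pb0*pb0 - pb0*pb2 + 2*qb1*pb1 + qb1*pb3 + pb1*qb3 - qb2*qb2 + pb2*pb2 - 2*qb3*pb3) = 0)
    (h3 : (2*qa0*pa1 + qa0*pa3 + 2*pa0*qa1 + pa0*qa3 + qa1*pa2 + pa1*qa2 - 2*qa2*pa3 - 2*pa2*qa3 - 2*qb0*pb0 - qb0*pb2 - pb0*qb2 + qb1*qb1 + qb1*qb3 - pb1*pb1 - pb1*pb3 + 2*qb2*pb2 - qb3*qb3 + pb3*pb3) = 0)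
    : (pa0 = 0 ∧ qa0 = 0 ∧ pa1 = 0 ∧ qa1 = 0 ∧ pa2 = 0 ∧ qa2 = 0 ∧ pa3 = 0 ∧ qa3 = 0 ∧ pb0 = 0 ∧ qb0 = 0 ∧ pb1 = 0 ∧ qb1 = 0 ∧ pb2 = 0 ∧ qb2 = 0 ∧ pb3 = 0 ∧ qb3 = 0) := by
  have hDq : (((pa0.den * (qa0.den * (pa1.den * (qa1.den * (pa2.den * (qa2.den * (pa3.den * (qa3.den * (pb0.den * (qb0.den * (pb1.den * (qb1.den * (pb2.den * (qb2.den * (pb3.den * (qb3.den)))))))))))))))) : ℕ) : ℚ) ≠ 0 := Nat.cast_ne_zero.mpr (Nat.mul_ne_zero (Rat.den_ne_zero _) (Nat.mul_ne_zero (Rat.den_ne_zero _) (Nat.mul_ne_zero (Rat.den_ne_zero _) (Nat.mul_ne_zero (Rat.den_ne_zero _) (Nat.mul_ne_zero (Rat.den_ne_zero _) (Nat.mul_ne_zero (Rat.den_ne_zero _) (Nat.mul_ne_zero (Rat.den_ne_zero _) (Nat.mul_ne_zero (Rat.den_ne_zero _) (Nat.mul_ne_zero (Rat.den_ne_zero _)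 (Nat.mul_ne_zero (Rat.den_ne_zero _) (Nat.mul_ne_zero (Rat.den_ne_zero _) (Nat.mul_ne_zero (Rat.den_ne_zero _) (Nat.mul_ne_zero (Rat.den_ne_zero _) (Nat.mul_ne_zero (Rat.den_ne_zero _) (Nat.mul_ne_zero (Rat.den_ne_zero _) (Rat.den_ne_zero _))))))))))))))))
  obtain ⟨za0r, he0⟩ := gc_ratscale pa0 (pa0.den * (qa0.den * (pa1.den * (qa1.den * (pa2.den * (qa2.den * (pa3.den * (qa3.den * (pb0.den * (qb0.den * (pb1.den * (qb1.den * (pb2.den * (qb2.den * (pb3.den * (qb3.den)))))))))))))))) ⟨(qa0.den * (pa1.den * (qa1.den * (pa2.den * (qa2.den * (pa3.den * (qa3.den * (pb0.den * (qb0.den * (pb1.den * (qb1.den * (pb2.den * (qb2.den * (pb3.den * (qb3.den))))))))))))))), by ring⟩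
  obtain ⟨za0i, he1⟩ := gc_ratscale qa0 (pa0.den * (qa0.den * (pa1.den * (qa1.den * (pa2.den * (qa2.den * (pa3.den * (qa3.den * (pb0.den * (qb0.den * (pb1.den * (qb1.den * (pb2.den * (qb2.den * (pb3.den * (qb3.den)))))))))))))))) ⟨(pa0.den * (pa1.den * (qa1.den * (pa2.den * (qa2.den * (pa3.den * (qa3.den * (pb0.den * (qb0.den * (pb1.den * (qb1.den * (pb2.den * (qb2.den * (pb3.den * (qb3.den))))))))))))))), by ring⟩
  obtain ⟨za1r, he2⟩ := gc_ratscale pa1 (pa0.den * (qa0.den * (pa1.den * (qa1.den * (pa2.den * (qa2.den * (pa3.den * (qa3.den * (pb0.den * (qb0.den * (pb1.den * (qb1.den * (pb2.den * (qb2.den * (pb3.den * (qb3.den)))))))))))))))) ⟨(pa0.den * (qa0.den * (qa1.den * (pa2.den * (qa2.den * (pa3.den * (qa3.den * (pb0.den * (qb0.den * (pb1.den * (qb1.den * (pb2.den * (qb2.den * (pb3.den * (qb3.den))))))))))))))), by ring⟩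
  obtain ⟨za1i, he3⟩ := gc_ratscale qa1 (pa0.den * (qa0.den * (pa1.den * (qa1.den * (pa2.den * (qa2.den * (pa3.den * (qa3.den * (pb0.den * (qb0.den * (pb1.den * (qb1.den * (pb2.den * (qb2.den * (pb3.den * (qb3.den)))))))))))))))) ⟨(pa0.den * (qa0.den * (pa1.den * (pa2.den * (qa2.den * (pa3.den * (qa3.den * (pb0.den * (qb0.den * (pb1.den * (qb1.den * (pb2.den * (qb2.den * (pb3.den * (qb3.den))))))))))))))), by ring⟩
  obtain ⟨zb0r, he4⟩ := gc_ratscale pa2 (pa0.den * (qa0.den * (pa1.den * (qa1.den * (pa2.den * (qa2.den * (pa3.den * (qa3.den * (pb0.den * (qb0.den * (pb1.den * (qb1.den * (pb2.den * (qb2.den * (pb3.den * (qb3.den)))))))))))))))) ⟨(pa0.den * (qa0.den * (pa1.den * (qa1.den * (qa2.den * (pa3.den * (qa3.den * (pb0.den * (qb0.den * (pb1.den * (qb1.den * (pb2.den * (qb2.den * (pb3.den * (qb3.den))))))))))))))), by ring⟩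
  obtain ⟨zb0i, he5⟩ := gc_ratscale qa2 (pa0.den * (qa0.den * (pa1.den * (qa1.den * (pa2.den * (qa2.den * (pa3.den * (qa3.den * (pb0.den * (qb0.den * (pb1.den * (qb1.den * (pb2.den * (qb2.den * (pb3.den * (qb3.den)))))))))))))))) ⟨(pa0.den * (qa0.den * (pa1.den * (qa1.den * (pa2.den * (pa3.den * (qa3.den * (pb0.den * (qb0.den * (pb1.den * (qb1.den * (pb2.den * (qb2.den * (pb3.den * (qb3.den))))))))))))))), by ring⟩
  obtain ⟨zb1r, he6⟩ := gc_ratscale pa3 (pa0.den * (qa0.den * (pa1.den * (qa1.den * (pa2.den * (qa2.den * (pa3.den * (qa3.den * (pb0.den * (qb0.den * (pb1.den * (qb1.den * (pb2.den * (qb2.den * (pb3.den * (qb3.den)))))))))))))))) ⟨(pa0.den * (qa0.den * (pa1.den * (qa1.den * (pa2.den * (qa2.den * (qa3.den * (pb0.den * (qb0.den * (pb1.den * (qb1.den * (pb2.den * (qb2.den * (pb3.den * (qb3.den))))))))))))))), by ring⟩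
  obtain ⟨zb1i, he7⟩ := gc_ratscale qa3 (pa0.den * (qa0.den * (pa1.den * (qa1.den * (pa2.den * (qa2.den * (pa3.den * (qa3.den * (pb0.den * (qb0.den * (pb1.den * (qb1.den * (pb2.den * (qb2.den * (pb3.den * (qb3.den)))))))))))))))) ⟨(pa0.den * (qa0.den * (pa1.den * (qa1.den * (pa2.den * (qa2.den * (pa3.den * (pb0.den * (qb0.den * (pb1.den * (qb1.den * (pb2.den * (qb2.den * (pb3.den * (qb3.den))))))))))))))), by ring⟩
  obtain ⟨zc0r, he8⟩ := gc_ratscale pb0 (pa0.den * (qa0.den * (pa1.den * (qa1.den * (pa2.den * (qa2.den * (pa3.den * (qa3.den * (pb0.den * (qb0.den * (pb1.den * (qb1.den * (pb2.den * (qb2.den * (pb3.den * (qb3.den)))))))))))))))) ⟨(pa0.den * (qa0.den * (pa1.den * (qa1.den * (pa2.den * (qa2.den * (pa3.den * (qa3.den * (qb0.den * (pb1.den * (qb1.den * (pb2.den * (qb2.den * (pb3.den * (qb3.den))))))))))))))), by ring⟩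
  obtain ⟨zc0i, he9⟩ := gc_ratscale qb0 (pa0.den * (qa0.den * (pa1.den * (qa1.den * (pa2.den * (qa2.den * (pa3.den * (qa3.den * (pb0.den * (qb0.den * (pb1.den * (qb1.den * (pb2.den * (qb2.den * (pb3.den * (qb3.den)))))))))))))))) ⟨(pa0.den * (qa0.den * (pa1.den * (qa1.den * (pa2.den * (qa2.den * (pa3.den * (qa3.den * (pb0.den * (pb1.den * (qb1.den * (pb2.den * (qb2.den * (pb3.den * (qb3.den))))))))))))))), by ring⟩
  obtain ⟨zc1r, he10⟩ := gc_ratscale pb1 (pa0.den * (qa0.den * (pa1.den * (qa1.den * (pa2.den * (qa2.den * (pa3.den * (qa3.den * (pb0.den * (qb0.den * (pb1.den * (qb1.den * (pb2.den * (qb2.den * (pb3.den * (qb3.den)))))))))))))))) ⟨(pa0.den * (qa0.den * (pa1.den * (qa1.den * (pa2.den * (qa2.den * (pa3.den * (qa3.den * (pb0.den * (qb0.den * (qb1.den * (pb2.den * (qb2.den * (pb3.den * (qb3.den))))))))))))))), by ring⟩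
  obtain ⟨zc1i, he11⟩ := gc_ratscale qb1 (pa0.den * (qa0.den * (pa1.den * (qa1.den * (pa2.den * (qa2.den * (pa3.den * (qa3.den * (pb0.den * (qb0.den * (pb1.den * (qb1.den * (pb2.den * (qb2.den * (pb3.den * (qb3.den)))))))))))))))) ⟨(pa0.den * (qa0.den * (pa1.den * (qa1.den * (pa2.den * (qa2.den * (pa3.den * (qa3.den * (pb0.den * (qb0.den * (pb1.den * (pb2.den * (qb2.den * (pb3.den * (qb3.den))))))))))))))), by ring⟩
  obtain ⟨zd0r, he12⟩ := gc_ratscale pb2 (pa0.den * (qa0.den * (pa1.den * (qa1.den * (pa2.den * (qa2.den * (pa3.den * (qa3.den * (pb0.den * (qb0.den * (pb1.den * (qb1.den * (pb2.den * (qb2.den * (pb3.den * (qb3.den)))))))))))))))) ⟨(pa0.den * (qa0.den * (pa1.den * (qa1.den * (pa2.den * (qa2.den * (pa3.den * (qa3.den * (pb0.den * (qb0.den * (pb1.den * (qb1.den * (qb2.den * (pb3.den * (qb3.den))))))))))))))), by ring⟩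
  obtain ⟨zd0i, he13⟩ := gc_ratscale qb2 (pa0.den * (qa0.den * (pa1.den * (qa1.den * (pa2.den * (qa2.den * (pa3.den * (qa3.den * (pb0.den * (qb0.den * (pb1.den * (qb1.den * (pb2.den * (qb2.den * (pb3.den * (qb3.den)))))))))))))))) ⟨(pa0.den * (qa0.den * (pa1.den * (qa1.den * (pa2.den * (qa2.den * (pa3.den * (qa3.den * (pb0.den * (qb0.den * (pb1.den * (qb1.den * (pb2.den * (pb3.den * (qb3.den))))))))))))))), by ring⟩
  obtain ⟨zd1r, he14⟩ := gc_ratscale pb3 (pa0.den * (qa0.den * (pa1.den * (qa1.den * (pa2.den * (qa2.den * (pa3.den * (qa3.den * (pb0.den * (qb0.den * (pb1.den * (qb1.den * (pb2.den * (qb2.den * (pb3.den * (qb3.den)))))))))))))))) ⟨(pa0.den * (qa0.den * (pa1.den * (qa1.den * (pa2.den * (qa2.den * (pa3.den * (qa3.den * (pb0.den * (qb0.den * (pb1.den * (qb1.den * (pb2.den * (qb2.den * (qb3.den))))))))))))))), by ring⟩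
  obtain ⟨zd1i, he15⟩ := gc_ratscale qb3 (pa0.den * (qa0.den * (pa1.den * (qa1.den * (pa2.den * (qa2.den * (pa3.den * (qa3.den * (pb0.den * (qb0.den * (pb1.den * (qb1.den * (pb2.den * (qb2.den * (pb3.den * (qb3.den)))))))))))))))) ⟨(pa0.den * (qa0.den * (pa1.den * (qa1.den * (pa2.den * (qa2.den * (pa3.den * (qa3.den * (pb0.den * (qb0.den * (pb1.den * (qb1.den * (pb2.den * (qb2.den * (pb3.den))))))))))))))), by ring⟩
  have H0 : (-za0i*za0i - za0i*zb0i + za0r*za0r + za0r*zb0r - 2*za1i*za1r - za1i*zb1r - za1r*zb1i + zb0i*zb0i - zb0r*zb0r + 2*zb1i*zb1r + 2*zc0i*zc1r + zc0i*zd1r + 2*zc0r*zc1i + zc0r*zd1i + zc1i*zd0r + zc1r*zd0i - 2*zd0i*zd1r - 2*zd0r*zd1i) = 0 := by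
    have hq : (((-za0i*za0i - za0i*zb0i + za0r*za0r + za0r*zb0r - 2*za1i*za1r - za1i*zb1r - za1r*zb1i + zb0i*zb0i - zb0r*zb0r + 2*zb1i*zb1r + 2*zc0i*zc1r + zc0i*zd1r + 2*zc0r*zc1i + zc0r*zd1i + zc1i*zd0r + zc1r*zd0i - 2*zd0i*zd1r - 2*zd0r*zd1i) : ℤ) : ℚ) = ((0 : ℤ) : ℚ) := by
      push_cast
      rw [he0, he1, he2, he3, he4, he5, he6, he7, he8, he9, he10, he11, he12, he13, he14, he15]
      linear_combination (((pa0.den * (qa0.den * (pa1.den * (qa1.den * (pa2.den * (qa2.den * (pa3.den * (qa3.den * (pb0.den * (qb0.den * (pb1.den * (qb1.den * (pb2.den * (qb2.den * (pb3.den * (qb3.den)))))))))))))))) : ℕ) : ℚ)^2 * h0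
    exact_mod_cast hq
  have H1 : (2*za0i*za0r + za0i*zb0r + za0r*zb0i - za1i*za1i - za1i*zb1i + za1r*za1r + za1r*zb1r - 2*zb0i*zb0r + zb1i*zb1i - zb1r*zb1r + 2*zc0i*zc1i + zc0i*zd1i - 2*zc0r*zc1r - zc0r*zd1r + zc1i*zd0i - zc1r*zd0r - 2*zd0i*zd1i + 2*zd0r*zd1r) = 0 := by
    have hq : (((2*za0i*za0r + za0i*zb0r + za0r*zb0i - za1i*za1i - za1i*zb1i + za1r*za1r + za1r*zb1r - 2*zb0i*zb0r + zb1i*zb1i - zb1r*zb1r + 2*zc0i*zc1i + zc0i*zd1i - 2*zc0r*zc1r - zc0r*zd1r + zc1i*zd0i - zc1r*zd0r - 2*zd0i*zd1i + 2*zd0r*zd1r) : ℤ) : ℚ) = ((0 : ℤ) : ℚ) := by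
      push_cast
      rw [he0, he1, he2, he3, he4, he5, he6, he7, he8, he9, he10, he11, he12, he13, he14, he15]
      linear_combination (((pa0.den * (qa0.den * (pa1.den * (qa1.den * (pa2.den * (qa2.den * (pa3.den * (qa3.den * (pb0.den * (qb0.den * (pb1.den * (qb1.den * (pb2.den * (qb2.den * (pb3.den * (qb3.den)))))))))))))))) : ℕ) : ℚ)^2 * h1
    exact_mod_cast hq
  have H2 : (-2*za0i*za1i - za0i*zb1i + 2*za0r*za1r + za0r*zb1r - za1i*zb0i + za1r*zb0r + 2*zb0i*zb1i - 2*zb0r*zb1r + zc0i*zc0i + zc0i*zd0i - zc0r*zc0r - zc0r*zd0r + 2*zc1i*zc1r + zc1i*zd1r + zc1r*zd1i - zd0i*zd0i + zd0r*zd0r - 2*zd1i*zd1r) = 0 := by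
    have hq : (((-2*za0i*za1i - za0i*zb1i + 2*za0r*za1r + za0r*zb1r - za1i*zb0i + za1r*zb0r + 2*zb0i*zb1i - 2*zb0r*zb1r + zc0i*zc0i + zc0i*zd0i - zc0r*zc0r - zc0r*zd0r + 2*zc1i*zc1r + zc1i*zd1r + zc1r*zd1i - zd0i*zd0i + zd0r*zd0r - 2*zd1i*zd1r) : ℤ) : ℚ) = ((0 : ℤ) : ℚ) := by
      push_cast
      rw [he0, he1, he2, he3, he4, he5, he6, he7, he8, he9, he10, he11, he12, he13, he14, he15]
      linear_combination (((pa0.den * (qa0.den * (pa1.den * (qa1.den * (pa2.den * (qa2.den * (pa3.den * (qa3.den * (pb0.den * (qb0.den * (pb1.den * (qb1.den * (pb2.den * (qb2.den * (pb3.den * (qb3.den)))))))))))))))) : ℕ) : ℚ)^2 * h2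
    exact_mod_cast hq
  have H3 : (2*za0i*za1r + za0i*zb1r + 2*za0r*za1i + za0r*zb1i + za1i*zb0r + za1r*zb0i - 2*zb0i*zb1r - 2*zb0r*zb1i - 2*zc0i*zc0r - zc0i*zd0r - zc0r*zd0i + zc1i*zc1i + zc1i*zd1i - zc1r*zc1r - zc1r*zd1r + 2*zd0i*zd0r - zd1i*zd1i + zd1r*zd1r) = 0 := by
    have hq : (((2*za0i*za1r + za0i*zb1r + 2*za0r*za1i + za0r*zb1i + za1i*zb0r + za1r*zb0i - 2*zb0i*zb1r - 2*zb0r*zb1i - 2*zc0i*zc0r - zc0i*zd0r - zc0r*zd0i + zc1i*zc1i + zc1i*zd1i - zc1r*zc1r - zc1r*zd1r + 2*zd0i*zd0r - zd1i*zd1i + zd1r*zd1r) : ℤ) : ℚ) = ((0 : ℤ) : ℚ) := by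
      push_cast
      rw [he0, he1, he2, he3, he4, he5, he6, he7, he8, he9, he10, he11, he12, he13, he14, he15]
      linear_combination (((pa0.den * (qa0.den * (pa1.den * (qa1.den * (pa2.den * (qa2.den * (pa3.den * (qa3.den * (pb0.den * (qb0.den * (pb1.den * (qb1.den * (pb2.den * (qb2.den * (pb3.den * (qb3.den)))))))))))))))) : ℕ) : ℚ)^2 * h3
    exact_mod_cast hq
  obtain ⟨w0, w1, w2, w3, w4, w5, w6, w7, w8, w9, w10, w11, w12, w13, w14, w15⟩ := gc_coreZ' za0r za0i za1r za1i zb0r zb0i zb1r zb1i zc0r zc0i zc1r zc1i zd0r zd0i zd1r zd1i H0 H1 H2 H3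
  refine ⟨?_, ?_, ?_, ?_, ?_, ?_, ?_, ?_, ?_, ?_, ?_, ?_, ?_, ?_, ?_, ?_⟩
  case _ =>
    have h := he0
    rw [w0] at h
    rw [Int.cast_zero] at h
    exact (mul_eq_zero.mp h.symm).resolve_right hDq
  case _ =>
    have h := he1
    rw [w1] at h
    rw [Int.cast_zero] at h
    exact (mul_eq_zero.mp h.symm).resolve_right hDq
  case _ =>
    have h := he2
    rw [w2] at h
    rw [Int.cast_zero] at h
    exact (mul_eq_zero.mp h.symm).resolve_right hDq
  case _ =>
    have h := he3
    rw [w3] at h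
    rw [Int.cast_zero] at h
    exact (mul_eq_zero.mp h.symm).resolve_right hDq
  case _ =>
    have h := he4
    rw [w4] at h
    rw [Int.cast_zero] at h
    exact (mul_eq_zero.mp h.symm).resolve_right hDq
  case _ =>
    have h := he5
    rw [w5] at h
    rw [Int.cast_zero] at h
    exact (mul_eq_zero.mp h.symm).resolve_right hDq
  case _ =>
    have h := he6
    rw [w6] at h
    rw [Int.cast_zero] at h
    exact (mul_eq_zero.mp h.symm).resolve_right hDq
  case _ =>
    have h := he7
    rw [w7] at h
    rw [Int.cast_zero] at h
    exact (mul_eq_zero.mp h.symm).resolve_right hDq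
  case _ =>
    have h := he8
    rw [w8] at h
    rw [Int.cast_zero] at h
    exact (mul_eq_zero.mp h.symm).resolve_right hDq
  case _ =>
    have h := he9
    rw [w9] at h
    rw [Int.cast_zero] at h
    exact (mul_eq_zero.mp h.symm).resolve_right hDq
  case _ =>
    have h := he10
    rw [w10] at h
    rw [Int.cast_zero] at h
    exact (mul_eq_zero.mp h.symm).resolve_right hDq
  case _ =>
    have h := he11
    rw [w11] at h
    rw [Int.cast_zero] at h
    exact (mul_eq_zero.mp h.symm).resolve_right hDq
  case _ =>
    have h := he12
    rw [w12] at h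
    rw [Int.cast_zero] at h
    exact (mul_eq_zero.mp h.symm).resolve_right hDq
  case _ =>
    have h := he13
    rw [w13] at h
    rw [Int.cast_zero] at h
    exact (mul_eq_zero.mp h.symm).resolve_right hDq
  case _ =>
    have h := he14
    rw [w14] at h
    rw [Int.cast_zero] at h
    exact (mul_eq_zero.mp h.symm).resolve_right hDq
  case _ =>
    have h := he15
    rw [w15] at h
    rw [Int.cast_zero] at h
    exact (mul_eq_zero.mp h.symm).resolve_right hDq

/-- For all `x, y ∈ K = ℚ(ζ₈, √5)`, `det Ξ(x, y) = x·σ(x) − ζ₈·y·σ(y)`, and this determinant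
vanishes iff `x = 0` and `y = 0`; in particular `Ξ(x, y)` is invertible for `(x, y) ≠ (0, 0)`. -/
theorem golden_code_nonvanishing_determinant :
    ∀ a b : Fin 4 → ℂ, (∀ i, a i ∈ Qi) → (∀ i, b i ∈ Qi) →
      (Xi a b).det = emb a * embσ a - ζ₈ * (emb b * embσ b) ∧
      ((Xi a b).det = 0 ↔ emb a = 0 ∧ emb b = 0) ∧
      (¬(emb a = 0 ∧ emb b = 0) → IsUnit (Xi a b)) := by
  intro a b ha hb
  have hdet : (Xi a b).det = emb a * embσ a - ζ₈ * (emb b * embσ b) := by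
    rw [Xi, Matrix.det_fin_two_of]; ring
  have key : (Xi a b).det = 0 ↔ emb a = 0 ∧ emb b = 0 := by
    constructor
    · intro hd0
      obtain ⟨pa0, qa0, ha0⟩ := (ha 0 : ∃ p q : ℚ, a 0 = (p : ℂ) + (q : ℂ) * Complex.I)
      obtain ⟨pa1, qa1, ha1⟩ := (ha 1 : ∃ p q : ℚ, a 1 = (p : ℂ) + (q : ℂ) * Complex.I)
      obtain ⟨pa2, qa2, ha2⟩ := (ha 2 : ∃ p q : ℚ, a 2 = (p : ℂ) + (q : ℂ) * Complex.I)
      obtain ⟨pa3, qa3, ha3⟩ := (ha 3 : ∃ p q : ℚ, a 3 = (p : ℂ) + (q : ℂ) * Complex.I)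
      obtain ⟨pb0, qb0, hb0⟩ := (hb 0 : ∃ p q : ℚ, b 0 = (p : ℂ) + (q : ℂ) * Complex.I)
      obtain ⟨pb1, qb1, hb1⟩ := (hb 1 : ∃ p q : ℚ, b 1 = (p : ℂ) + (q : ℂ) * Complex.I)
      obtain ⟨pb2, qb2, hb2⟩ := (hb 2 : ∃ p q : ℚ, b 2 = (p : ℂ) + (q : ℂ) * Complex.I)
      obtain ⟨pb3, qb3, hb3⟩ := (hb 3 : ∃ p q : ℚ, b 3 = (p : ℂ) + (q : ℂ) * Complex.I)
      rw [hdet] at hd0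
      simp only [emb, embσ] at hd0
      rw [ha0, ha1, ha2, ha3, hb0, hb1, hb2, hb3] at hd0
      have hF : ((-((qa0 : ℂ))*((qa0 : ℂ)) - ((qa0 : ℂ))*((qa2 : ℂ)) + ((pa0 : ℂ))*((pa0 : ℂ)) + ((pa0 : ℂ))*((pa2 : ℂ)) - 2*((qa1 : ℂ))*((pa1 : ℂ)) - ((qa1 : ℂ))*((pa3 : ℂ)) - ((pa1 : ℂ))*((qa3 : ℂ)) + ((qa2 : ℂ))*((qa2 : ℂ)) - ((pa2 : ℂ))*((pa2 : ℂ)) + 2*((qa3 : ℂ))*((pa3 : ℂ)) + 2*((qb0 : ℂ))*((pb1 : ℂ)) + ((qb0 : ℂ))*((pb3 : ℂ)) + 2*((pb0 : ℂ))*((qb1 : ℂ)) + ((pb0 : ℂ))*((qb3 : ℂ)) + ((qb1 : ℂ))*((pb2 : ℂ)) + ((pb1 : ℂ))*((qb2 : ℂ)) - 2*((qb2 : ℂ))*((pb3 : ℂ)) - 2*((pb2 : ℂ))*((qb3 : ℂ)))) + ((2*((qa0 : ℂ))*((pa0 : ℂ)) + ((qa0 : ℂ))*((pa2 : ℂ))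 + ((pa0 : ℂ))*((qa2 : ℂ)) - ((qa1 : ℂ))*((qa1 : ℂ)) - ((qa1 : ℂ))*((qa3 : ℂ)) + ((pa1 : ℂ))*((pa1 : ℂ)) + ((pa1 : ℂ))*((pa3 : ℂ)) - 2*((qa2 : ℂ))*((pa2 : ℂ)) + ((qa3 : ℂ))*((qa3 : ℂ)) - ((pa3 : ℂ))*((pa3 : ℂ)) + 2*((qb0 : ℂ))*((qb1 : ℂ)) + ((qb0 : ℂ))*((qb3 : ℂ)) - 2*((pb0 : ℂ))*((pb1 : ℂ)) - ((pb0 : ℂ))*((pb3 : ℂ)) + ((qb1 : ℂ))*((qb2 : ℂ)) - ((pb1 : ℂ))*((pb2 : ℂ)) - 2*((qb2 : ℂ))*((qb3 : ℂ)) + 2*((pb2 : ℂ))*((pb3 : ℂ))))*Complex.I + (((-2*((qa0 : ℂ))*((qa1 : ℂ)) - ((qa0 : ℂ))*((qa3 : ℂ)) + 2*((pa0 : ℂ))*((pa1 : ℂ)) + ((pa0 : ℂ))*((pa3 : ℂ)) - ((qa1 : ℂ))*((qa2 : ℂ)) + ((pa1 : ℂ))*((pa2 : ℂ)) + 2*((qa2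 : ℂ))*((qa3 : ℂ)) - 2*((pa2 : ℂ))*((pa3 : ℂ)) + ((qb0 : ℂ))*((qb0 : ℂ)) + ((qb0 : ℂ))*((qb2 : ℂ)) - ((pb0 : ℂ))*((pb0 : ℂ)) - ((pb0 : ℂ))*((pb2 : ℂ)) + 2*((qb1 : ℂ))*((pb1 : ℂ)) + ((qb1 : ℂ))*((pb3 : ℂ)) + ((pb1 : ℂ))*((qb3 : ℂ)) - ((qb2 : ℂ))*((qb2 : ℂ)) + ((pb2 : ℂ))*((pb2 : ℂ)) - 2*((qb3 : ℂ))*((pb3 : ℂ)))) + ((2*((qa0 : ℂ))*((pa1 : ℂ)) + ((qa0 : ℂ))*((pa3 : ℂ)) + 2*((pa0 : ℂ))*((qa1 : ℂ)) + ((pa0 : ℂ))*((qa3 : ℂ)) + ((qa1 : ℂ))*((pa2 : ℂ)) + ((pa1 : ℂ))*((qa2 : ℂ)) - 2*((qa2 : ℂ))*((pa3 : ℂ)) - 2*((pa2 : ℂ))*((qa3 : ℂ)) - 2*((qb0 : ℂ))*((pb0 : ℂ)) - ((qb0 : ℂ))*((pb2 : ℂ)) - ((pb0 : ℂ))*((qb2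 : ℂ)) + ((qb1 : ℂ))*((qb1 : ℂ)) + ((qb1 : ℂ))*((qb3 : ℂ)) - ((pb1 : ℂ))*((pb1 : ℂ)) - ((pb1 : ℂ))*((pb3 : ℂ)) + 2*((qb2 : ℂ))*((pb2 : ℂ)) - ((qb3 : ℂ))*((qb3 : ℂ)) + ((pb3 : ℂ))*((pb3 : ℂ))))*Complex.I)*ζ₈ = 0 := by
        linear_combination hd0 - (Complex.I*Complex.I*((qa0 : ℂ))*((qa2 : ℂ)) + Complex.I*Complex.I*((qa0 : ℂ))*((qa3 : ℂ))*ζ₈ + Complex.I*Complex.I*((qa1 : ℂ))*((qa2 : ℂ))*ζ₈ + Complex.I*Complex.I*((qa1 : ℂ))*((qa3 : ℂ))*ζ₈*ζ₈ - Complex.I*Complex.I*((qb0 : ℂ))*((qb2 : ℂ))*ζ₈ - Complex.I*Complex.I*((qb0 : ℂ))*((qb3 : ℂ))*ζ₈*ζ₈ - Complex.I*Complex.I*((qb1 : ℂ))*((qb2 : ℂ))*ζ₈*ζ₈ - Complex.I*Complex.I*((qb1 : ℂ))*((qb3 : ℂ))*ζ₈*ζ₈*ζ₈ + Complex.I*((pa0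 : ℂ))*((qa2 : ℂ)) + Complex.I*((pa0 : ℂ))*((qa3 : ℂ))*ζ₈ + Complex.I*((pa1 : ℂ))*((qa2 : ℂ))*ζ₈ + Complex.I*((pa1 : ℂ))*((qa3 : ℂ))*ζ₈*ζ₈ + Complex.I*((pa2 : ℂ))*((qa0 : ℂ)) + Complex.I*((pa2 : ℂ))*((qa1 : ℂ))*ζ₈ + Complex.I*((pa3 : ℂ))*((qa0 : ℂ))*ζ₈ + Complex.I*((pa3 : ℂ))*((qa1 : ℂ))*ζ₈*ζ₈ - Complex.I*((pb0 : ℂ))*((qb2 : ℂ))*ζ₈ - Complex.I*((pb0 : ℂ))*((qb3 : ℂ))*ζ₈*ζ₈ - Complex.I*((pb1 : ℂ))*((qb2 : ℂ))*ζ₈*ζ₈ - Complex.I*((pb1 : ℂ))*((qb3 : ℂ))*ζ₈*ζ₈*ζ₈ - Complex.I*((pb2 : ℂ))*((qb0 : ℂ))*ζ₈ - Complex.I*((pb2 : ℂ))*((qb1 : ℂ))*ζ₈*ζ₈ - Complex.I*((pb3 : ℂ))*((qb0 : ℂ))*ζ₈*ζ₈ - Complex.I*((pb3 : ℂ))*((qb1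 : ℂ))*ζ₈*ζ₈*ζ₈ + ((pa0 : ℂ))*((pa2 : ℂ)) + ((pa0 : ℂ))*((pa3 : ℂ))*ζ₈ + ((pa1 : ℂ))*((pa2 : ℂ))*ζ₈ + ((pa1 : ℂ))*((pa3 : ℂ))*ζ₈*ζ₈ - ((pb0 : ℂ))*((pb2 : ℂ))*ζ₈ - ((pb0 : ℂ))*((pb3 : ℂ))*ζ₈*ζ₈ - ((pb1 : ℂ))*((pb2 : ℂ))*ζ₈*ζ₈ - ((pb1 : ℂ))*((pb3 : ℂ))*ζ₈*ζ₈*ζ₈)*gc_hsum - (Complex.I*Complex.I*((qa2 : ℂ))*((qa2 : ℂ)) + 2*Complex.I*Complex.I*((qa2 : ℂ))*((qa3 : ℂ))*ζ₈ + Complex.I*Complex.I*((qa3 : ℂ))*((qa3 : ℂ))*ζ₈*ζ₈ - Complex.I*Complex.I*((qb2 : ℂ))*((qb2 : ℂ))*ζ₈ - 2*Complex.I*Complex.I*((qb2 : ℂ))*((qb3 : ℂ))*ζ₈*ζ₈ - Complex.I*Complex.I*((qb3 : ℂ))*((qb3 : ℂ))*ζ₈*ζ₈*ζ₈ + 2*Complex.I*((pa2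 : ℂ))*((qa2 : ℂ)) + 2*Complex.I*((pa2 : ℂ))*((qa3 : ℂ))*ζ₈ + 2*Complex.I*((pa3 : ℂ))*((qa2 : ℂ))*ζ₈ + 2*Complex.I*((pa3 : ℂ))*((qa3 : ℂ))*ζ₈*ζ₈ - 2*Complex.I*((pb2 : ℂ))*((qb2 : ℂ))*ζ₈ - 2*Complex.I*((pb2 : ℂ))*((qb3 : ℂ))*ζ₈*ζ₈ - 2*Complex.I*((pb3 : ℂ))*((qb2 : ℂ))*ζ₈*ζ₈ - 2*Complex.I*((pb3 : ℂ))*((qb3 : ℂ))*ζ₈*ζ₈*ζ₈ + ((pa2 : ℂ))*((pa2 : ℂ)) + 2*((pa2 : ℂ))*((pa3 : ℂ))*ζ₈ + ((pa3 : ℂ))*((pa3 : ℂ))*ζ₈*ζ₈ - ((pb2 : ℂ))*((pb2 : ℂ))*ζ₈ - 2*((pb2 : ℂ))*((pb3 : ℂ))*ζ₈*ζ₈ - ((pb3 : ℂ))*((pb3 : ℂ))*ζ₈*ζ₈*ζ₈)*gc_hprod - (Complex.I*Complex.I*((qa1 : ℂ))*((qa1 : ℂ)) + Complex.I*Complex.I*((qa1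 : ℂ))*((qa3 : ℂ)) - Complex.I*Complex.I*((qa3 : ℂ))*((qa3 : ℂ)) - 2*Complex.I*Complex.I*((qb0 : ℂ))*((qb1 : ℂ)) - Complex.I*Complex.I*((qb0 : ℂ))*((qb3 : ℂ)) - Complex.I*Complex.I*((qb1 : ℂ))*((qb1 : ℂ))*ζ₈ - Complex.I*Complex.I*((qb1 : ℂ))*((qb2 : ℂ)) - Complex.I*Complex.I*((qb1 : ℂ))*((qb3 : ℂ))*ζ₈ + 2*Complex.I*Complex.I*((qb2 : ℂ))*((qb3 : ℂ)) + Complex.I*Complex.I*((qb3 : ℂ))*((qb3 : ℂ))*ζ₈ + 2*Complex.I*((pa1 : ℂ))*((qa1 : ℂ)) + Complex.I*((pa1 : ℂ))*((qa3 : ℂ)) + Complex.I*((pa3 : ℂ))*((qa1 : ℂ)) - 2*Complex.I*((pa3 : ℂ))*((qa3 : ℂ)) - 2*Complex.I*((pb0 : ℂ))*((qb1 : ℂ)) - Complex.I*((pb0 : ℂ))*((qb3 : ℂ)) - 2*Complex.I*((pb1 : ℂ))*((qb0 : ℂ)) - 2*Complex.I*((pb1 : ℂ))*((qb1 : ℂ))*ζ₈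 - Complex.I*((pb1 : ℂ))*((qb2 : ℂ)) - Complex.I*((pb1 : ℂ))*((qb3 : ℂ))*ζ₈ - Complex.I*((pb2 : ℂ))*((qb1 : ℂ)) + 2*Complex.I*((pb2 : ℂ))*((qb3 : ℂ)) - Complex.I*((pb3 : ℂ))*((qb0 : ℂ)) - Complex.I*((pb3 : ℂ))*((qb1 : ℂ))*ζ₈ + 2*Complex.I*((pb3 : ℂ))*((qb2 : ℂ)) + 2*Complex.I*((pb3 : ℂ))*((qb3 : ℂ))*ζ₈ + ((pa1 : ℂ))*((pa1 : ℂ)) + ((pa1 : ℂ))*((pa3 : ℂ)) - ((pa3 : ℂ))*((pa3 : ℂ)) - 2*((pb0 : ℂ))*((pb1 : ℂ)) - ((pb0 : ℂ))*((pb3 : ℂ)) - ((pb1 : ℂ))*((pb1 : ℂ))*ζ₈ - ((pb1 : ℂ))*((pb2 : ℂ)) - ((pb1 : ℂ))*((pb3 : ℂ))*ζ₈ + 2*((pb2 : ℂ))*((pb3 : ℂ)) + ((pb3 : ℂ))*((pb3 : ℂ))*ζ₈)*gc_hz2 - (Complex.I*((qa1 : ℂ))*((qa1 : ℂ)) + Complex.I*((qa1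 : ℂ))*((qa3 : ℂ)) - Complex.I*((qa3 : ℂ))*((qa3 : ℂ)) - 2*Complex.I*((qb0 : ℂ))*((qb1 : ℂ)) - Complex.I*((qb0 : ℂ))*((qb3 : ℂ)) - Complex.I*((qb1 : ℂ))*((qb1 : ℂ))*ζ₈ - Complex.I*((qb1 : ℂ))*((qb2 : ℂ)) - Complex.I*((qb1 : ℂ))*((qb3 : ℂ))*ζ₈ + 2*Complex.I*((qb2 : ℂ))*((qb3 : ℂ)) + Complex.I*((qb3 : ℂ))*((qb3 : ℂ))*ζ₈ + 2*((pa1 : ℂ))*((qa1 : ℂ)) + ((pa1 : ℂ))*((qa3 : ℂ)) + ((pa3 : ℂ))*((qa1 : ℂ)) - 2*((pa3 : ℂ))*((qa3 : ℂ)) - 2*((pb0 : ℂ))*((qb1 : ℂ)) - ((pb0 : ℂ))*((qb3 : ℂ)) - 2*((pb1 : ℂ))*((qb0 : ℂ)) - 2*((pb1 : ℂ))*((qb1 : ℂ))*ζ₈ - ((pb1 : ℂ))*((qb2 : ℂ)) - ((pb1 : ℂ))*((qb3 : ℂ))*ζ₈ - ((pb2 : ℂ))*((qb1 : ℂ)) +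 2*((pb2 : ℂ))*((qb3 : ℂ)) - ((pb3 : ℂ))*((qb0 : ℂ)) - ((pb3 : ℂ))*((qb1 : ℂ))*ζ₈ + 2*((pb3 : ℂ))*((qb2 : ℂ)) + 2*((pb3 : ℂ))*((qb3 : ℂ))*ζ₈ + ((qa0 : ℂ))*((qa0 : ℂ)) + 2*((qa0 : ℂ))*((qa1 : ℂ))*ζ₈ + ((qa0 : ℂ))*((qa2 : ℂ)) + ((qa0 : ℂ))*((qa3 : ℂ))*ζ₈ + ((qa1 : ℂ))*((qa2 : ℂ))*ζ₈ - ((qa2 : ℂ))*((qa2 : ℂ)) - 2*((qa2 : ℂ))*((qa3 : ℂ))*ζ₈ - ((qb0 : ℂ))*((qb0 : ℂ))*ζ₈ - ((qb0 : ℂ))*((qb2 : ℂ))*ζ₈ + ((qb2 : ℂ))*((qb2 : ℂ))*ζ₈)*Complex.I_mul_I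
      rw [gc_hz] at hF
      have hF2 : ((((-((qa0 : ℝ))*((qa0 : ℝ)) - ((qa0 : ℝ))*((qa2 : ℝ)) + ((pa0 : ℝ))*((pa0 : ℝ)) + ((pa0 : ℝ))*((pa2 : ℝ)) - 2*((qa1 : ℝ))*((pa1 : ℝ)) - ((qa1 : ℝ))*((pa3 : ℝ)) - ((pa1 : ℝ))*((qa3 : ℝ)) + ((qa2 : ℝ))*((qa2 : ℝ)) - ((pa2 : ℝ))*((pa2 : ℝ)) + 2*((qa3 : ℝ))*((pa3 : ℝ)) + 2*((qb0 : ℝ))*((pb1 : ℝ)) + ((qb0 : ℝ))*((pb3 : ℝ)) + 2*((pb0 : ℝ))*((qb1 : ℝ)) + ((pb0 : ℝ))*((qb3 : ℝ)) + ((qb1 : ℝ))*((pb2 : ℝ)) + ((pb1 : ℝ))*((qb2 : ℝ)) - 2*((qb2 : ℝ))*((pb3 : ℝ)) - 2*((pb2 : ℝ))*((qb3 : ℝ))) + ((-2*((qa0 : ℝ))*((qa1 : ℝ)) - ((qa0 : ℝ))*((qa3 : ℝ)) + 2*((pa0 : ℝ))*((pa1 : ℝ)) + ((pa0 : ℝ))*((pa3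 : ℝ)) - ((qa1 : ℝ))*((qa2 : ℝ)) + ((pa1 : ℝ))*((pa2 : ℝ)) + 2*((qa2 : ℝ))*((qa3 : ℝ)) - 2*((pa2 : ℝ))*((pa3 : ℝ)) + ((qb0 : ℝ))*((qb0 : ℝ)) + ((qb0 : ℝ))*((qb2 : ℝ)) - ((pb0 : ℝ))*((pb0 : ℝ)) - ((pb0 : ℝ))*((pb2 : ℝ)) + 2*((qb1 : ℝ))*((pb1 : ℝ)) + ((qb1 : ℝ))*((pb3 : ℝ)) + ((pb1 : ℝ))*((qb3 : ℝ)) - ((qb2 : ℝ))*((qb2 : ℝ)) + ((pb2 : ℝ))*((pb2 : ℝ)) - 2*((qb3 : ℝ))*((pb3 : ℝ))) - (2*((qa0 : ℝ))*((pa1 : ℝ)) + ((qa0 : ℝ))*((pa3 : ℝ)) + 2*((pa0 : ℝ))*((qa1 : ℝ)) + ((pa0 : ℝ))*((qa3 : ℝ)) + ((qa1 : ℝ))*((pa2 : ℝ)) + ((pa1 : ℝ))*((qa2 : ℝ)) - 2*((qa2 : ℝ))*((pa3 : ℝ)) - 2*((pa2 : ℝ))*((qa3 : ℝ)) - 2*((qb0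 : ℝ))*((pb0 : ℝ)) - ((qb0 : ℝ))*((pb2 : ℝ)) - ((pb0 : ℝ))*((qb2 : ℝ)) + ((qb1 : ℝ))*((qb1 : ℝ)) + ((qb1 : ℝ))*((qb3 : ℝ)) - ((pb1 : ℝ))*((pb1 : ℝ)) - ((pb1 : ℝ))*((pb3 : ℝ)) + 2*((qb2 : ℝ))*((pb2 : ℝ)) - ((qb3 : ℝ))*((qb3 : ℝ)) + ((pb3 : ℝ))*((pb3 : ℝ)))) * Real.sqrt 2 / 2) : ℝ) : ℂ) + ((((2*((qa0 : ℝ))*((pa0 : ℝ)) + ((qa0 : ℝ))*((pa2 : ℝ)) + ((pa0 : ℝ))*((qa2 : ℝ)) - ((qa1 : ℝ))*((qa1 : ℝ)) - ((qa1 : ℝ))*((qa3 : ℝ)) + ((pa1 : ℝ))*((pa1 : ℝ)) + ((pa1 : ℝ))*((pa3 : ℝ)) - 2*((qa2 : ℝ))*((pa2 : ℝ)) + ((qa3 : ℝ))*((qa3 : ℝ)) - ((pa3 : ℝ))*((pa3 : ℝ)) + 2*((qb0 : ℝ))*((qb1 : ℝ)) + ((qb0 : ℝ))*((qb3 : ℝ))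 - 2*((pb0 : ℝ))*((pb1 : ℝ)) - ((pb0 : ℝ))*((pb3 : ℝ)) + ((qb1 : ℝ))*((qb2 : ℝ)) - ((pb1 : ℝ))*((pb2 : ℝ)) - 2*((qb2 : ℝ))*((qb3 : ℝ)) + 2*((pb2 : ℝ))*((pb3 : ℝ))) + ((-2*((qa0 : ℝ))*((qa1 : ℝ)) - ((qa0 : ℝ))*((qa3 : ℝ)) + 2*((pa0 : ℝ))*((pa1 : ℝ)) + ((pa0 : ℝ))*((pa3 : ℝ)) - ((qa1 : ℝ))*((qa2 : ℝ)) + ((pa1 : ℝ))*((pa2 : ℝ)) + 2*((qa2 : ℝ))*((qa3 : ℝ)) - 2*((pa2 : ℝ))*((pa3 : ℝ)) + ((qb0 : ℝ))*((qb0 : ℝ)) + ((qb0 : ℝ))*((qb2 : ℝ)) - ((pb0 : ℝ))*((pb0 : ℝ)) - ((pb0 : ℝ))*((pb2 : ℝ)) + 2*((qb1 : ℝ))*((pb1 : ℝ)) + ((qb1 : ℝ))*((pb3 : ℝ)) + ((pb1 : ℝ))*((qb3 : ℝ)) - ((qb2 : ℝ))*((qb2 : ℝ)) + ((pb2 : ℝ))*((pb2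 : ℝ)) - 2*((qb3 : ℝ))*((pb3 : ℝ))) + (2*((qa0 : ℝ))*((pa1 : ℝ)) + ((qa0 : ℝ))*((pa3 : ℝ)) + 2*((pa0 : ℝ))*((qa1 : ℝ)) + ((pa0 : ℝ))*((qa3 : ℝ)) + ((qa1 : ℝ))*((pa2 : ℝ)) + ((pa1 : ℝ))*((qa2 : ℝ)) - 2*((qa2 : ℝ))*((pa3 : ℝ)) - 2*((pa2 : ℝ))*((qa3 : ℝ)) - 2*((qb0 : ℝ))*((pb0 : ℝ)) - ((qb0 : ℝ))*((pb2 : ℝ)) - ((pb0 : ℝ))*((qb2 : ℝ)) + ((qb1 : ℝ))*((qb1 : ℝ)) + ((qb1 : ℝ))*((qb3 : ℝ)) - ((pb1 : ℝ))*((pb1 : ℝ)) - ((pb1 : ℝ))*((pb3 : ℝ)) + 2*((qb2 : ℝ))*((pb2 : ℝ)) - ((qb3 : ℝ))*((qb3 : ℝ)) + ((pb3 : ℝ))*((pb3 : ℝ)))) * Real.sqrt 2 / 2) : ℝ) : ℂ) * Complex.I = 0 := by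
        push_cast
        linear_combination hF - (((pa0 : ℂ))*((qa1 : ℂ))*((Real.sqrt 2 : ℝ) : ℂ) + (((pa0 : ℂ))*((qa3 : ℂ))*((Real.sqrt 2 : ℝ) : ℂ))/2 + ((pa1 : ℂ))*((qa0 : ℂ))*((Real.sqrt 2 : ℝ) : ℂ) + (((pa1 : ℂ))*((qa2 : ℂ))*((Real.sqrt 2 : ℝ) : ℂ))/2 + (((pa2 : ℂ))*((qa1 : ℂ))*((Real.sqrt 2 : ℝ) : ℂ))/2 - ((pa2 : ℂ))*((qa3 : ℂ))*((Real.sqrt 2 : ℝ) : ℂ) + (((pa3 : ℂ))*((qa0 : ℂ))*((Real.sqrt 2 : ℝ) : ℂ))/2 - ((pa3 : ℂ))*((qa2 : ℂ))*((Real.sqrt 2 : ℝ) : ℂ) - ((pb0 : ℂ))*((qb0 : ℂ))*((Real.sqrt 2 : ℝ) : ℂ) - (((pb0 : ℂ))*((qb2 : ℂ))*((Real.sqrt 2 : ℝ) : ℂ))/2 - (((pb1 : ℂ))*((pb1 : ℂ))*((Real.sqrt 2 : ℝ) : ℂ))/2 - (((pb1 : ℂ))*((pb3 : ℂ))*((Real.sqrt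 2 : ℝ) : ℂ))/2 - (((pb2 : ℂ))*((qb0 : ℂ))*((Real.sqrt 2 : ℝ) : ℂ))/2 + ((pb2 : ℂ))*((qb2 : ℂ))*((Real.sqrt 2 : ℝ) : ℂ) + (((pb3 : ℂ))*((pb3 : ℂ))*((Real.sqrt 2 : ℝ) : ℂ))/2 + (((qb1 : ℂ))*((qb1 : ℂ))*((Real.sqrt 2 : ℝ) : ℂ))/2 + (((qb1 : ℂ))*((qb3 : ℂ))*((Real.sqrt 2 : ℝ) : ℂ))/2 - (((qb3 : ℂ))*((qb3 : ℂ))*((Real.sqrt 2 : ℝ) : ℂ))/2)*Complex.I_mul_I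
      have hu : (((-((qa0 : ℝ))*((qa0 : ℝ)) - ((qa0 : ℝ))*((qa2 : ℝ)) + ((pa0 : ℝ))*((pa0 : ℝ)) + ((pa0 : ℝ))*((pa2 : ℝ)) - 2*((qa1 : ℝ))*((pa1 : ℝ)) - ((qa1 : ℝ))*((pa3 : ℝ)) - ((pa1 : ℝ))*((qa3 : ℝ)) + ((qa2 : ℝ))*((qa2 : ℝ)) - ((pa2 : ℝ))*((pa2 : ℝ)) + 2*((qa3 : ℝ))*((pa3 : ℝ)) + 2*((qb0 : ℝ))*((pb1 : ℝ)) + ((qb0 : ℝ))*((pb3 : ℝ)) + 2*((pb0 : ℝ))*((qb1 : ℝ)) + ((pb0 : ℝ))*((qb3 : ℝ)) + ((qb1 : ℝ))*((pb2 : ℝ)) + ((pb1 : ℝ))*((qb2 : ℝ)) - 2*((qb2 : ℝ))*((pb3 : ℝ)) - 2*((pb2 : ℝ))*((qb3 : ℝ))) + ((-2*((qa0 : ℝ))*((qa1 : ℝ)) - ((qa0 : ℝ))*((qa3 : ℝ)) + 2*((pa0 : ℝ))*((pa1 : ℝ)) + ((pa0 : ℝ))*((pa3 : ℝ)) - ((qa1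 : ℝ))*((qa2 : ℝ)) + ((pa1 : ℝ))*((pa2 : ℝ)) + 2*((qa2 : ℝ))*((qa3 : ℝ)) - 2*((pa2 : ℝ))*((pa3 : ℝ)) + ((qb0 : ℝ))*((qb0 : ℝ)) + ((qb0 : ℝ))*((qb2 : ℝ)) - ((pb0 : ℝ))*((pb0 : ℝ)) - ((pb0 : ℝ))*((pb2 : ℝ)) + 2*((qb1 : ℝ))*((pb1 : ℝ)) + ((qb1 : ℝ))*((pb3 : ℝ)) + ((pb1 : ℝ))*((qb3 : ℝ)) - ((qb2 : ℝ))*((qb2 : ℝ)) + ((pb2 : ℝ))*((pb2 : ℝ)) - 2*((qb3 : ℝ))*((pb3 : ℝ))) - (2*((qa0 : ℝ))*((pa1 : ℝ)) + ((qa0 : ℝ))*((pa3 : ℝ)) + 2*((pa0 : ℝ))*((qa1 : ℝ)) + ((pa0 : ℝ))*((qa3 : ℝ)) + ((qa1 : ℝ))*((pa2 : ℝ)) + ((pa1 : ℝ))*((qa2 : ℝ)) - 2*((qa2 : ℝ))*((pa3 : ℝ)) - 2*((pa2 : ℝ))*((qa3 : ℝ)) - 2*((qb0 : ℝ))*((pb0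 : ℝ)) - ((qb0 : ℝ))*((pb2 : ℝ)) - ((pb0 : ℝ))*((qb2 : ℝ)) + ((qb1 : ℝ))*((qb1 : ℝ)) + ((qb1 : ℝ))*((qb3 : ℝ)) - ((pb1 : ℝ))*((pb1 : ℝ)) - ((pb1 : ℝ))*((pb3 : ℝ)) + 2*((qb2 : ℝ))*((pb2 : ℝ)) - ((qb3 : ℝ))*((qb3 : ℝ)) + ((pb3 : ℝ))*((pb3 : ℝ)))) * Real.sqrt 2 / 2)) = 0 := by
        have h := congrArg Complex.re hF2
        simpa using h
      have hv : (((2*((qa0 : ℝ))*((pa0 : ℝ)) + ((qa0 : ℝ))*((pa2 : ℝ)) + ((pa0 : ℝ))*((qa2 : ℝ)) - ((qa1 : ℝ))*((qa1 : ℝ)) - ((qa1 : ℝ))*((qa3 : ℝ)) + ((pa1 : ℝ))*((pa1 : ℝ)) + ((pa1 : ℝ))*((pa3 : ℝ)) - 2*((qa2 : ℝ))*((pa2 : ℝ)) + ((qa3 : ℝ))*((qa3 : ℝ)) - ((pa3 : ℝ))*((pa3 : ℝ)) + 2*((qb0 : ℝ))*((qb1 : ℝ)) + ((qb0 : ℝ))*((qb3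 : ℝ)) - 2*((pb0 : ℝ))*((pb1 : ℝ)) - ((pb0 : ℝ))*((pb3 : ℝ)) + ((qb1 : ℝ))*((qb2 : ℝ)) - ((pb1 : ℝ))*((pb2 : ℝ)) - 2*((qb2 : ℝ))*((qb3 : ℝ)) + 2*((pb2 : ℝ))*((pb3 : ℝ))) + ((-2*((qa0 : ℝ))*((qa1 : ℝ)) - ((qa0 : ℝ))*((qa3 : ℝ)) + 2*((pa0 : ℝ))*((pa1 : ℝ)) + ((pa0 : ℝ))*((pa3 : ℝ)) - ((qa1 : ℝ))*((qa2 : ℝ)) + ((pa1 : ℝ))*((pa2 : ℝ)) + 2*((qa2 : ℝ))*((qa3 : ℝ)) - 2*((pa2 : ℝ))*((pa3 : ℝ)) + ((qb0 : ℝ))*((qb0 : ℝ)) + ((qb0 : ℝ))*((qb2 : ℝ)) - ((pb0 : ℝ))*((pb0 : ℝ)) - ((pb0 : ℝ))*((pb2 : ℝ)) + 2*((qb1 : ℝ))*((pb1 : ℝ)) + ((qb1 : ℝ))*((pb3 : ℝ)) + ((pb1 : ℝ))*((qb3 : ℝ)) - ((qb2 : ℝ))*((qb2 : ℝ)) + ((pb2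 : ℝ))*((pb2 : ℝ)) - 2*((qb3 : ℝ))*((pb3 : ℝ))) + (2*((qa0 : ℝ))*((pa1 : ℝ)) + ((qa0 : ℝ))*((pa3 : ℝ)) + 2*((pa0 : ℝ))*((qa1 : ℝ)) + ((pa0 : ℝ))*((qa3 : ℝ)) + ((qa1 : ℝ))*((pa2 : ℝ)) + ((pa1 : ℝ))*((qa2 : ℝ)) - 2*((qa2 : ℝ))*((pa3 : ℝ)) - 2*((pa2 : ℝ))*((qa3 : ℝ)) - 2*((qb0 : ℝ))*((pb0 : ℝ)) - ((qb0 : ℝ))*((pb2 : ℝ)) - ((pb0 : ℝ))*((qb2 : ℝ)) + ((qb1 : ℝ))*((qb1 : ℝ)) + ((qb1 : ℝ))*((qb3 : ℝ)) - ((pb1 : ℝ))*((pb1 : ℝ)) - ((pb1 : ℝ))*((pb3 : ℝ)) + 2*((qb2 : ℝ))*((pb2 : ℝ)) - ((qb3 : ℝ))*((qb3 : ℝ)) + ((pb3 : ℝ))*((pb3 : ℝ)))) * Real.sqrt 2 / 2)) = 0 := by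
        have h := congrArg Complex.im hF2
        simpa using h
      obtain ⟨hr0, hr23m⟩ := gc_ratsqrt2 (-qa0*qa0 - qa0*qa2 + pa0*pa0 + pa0*pa2 - 2*qa1*pa1 - qa1*pa3 - pa1*qa3 + qa2*qa2 - pa2*pa2 + 2*qa3*pa3 + 2*qb0*pb1 + qb0*pb3 + 2*pb0*qb1 + pb0*qb3 + qb1*pb2 + pb1*qb2 - 2*qb2*pb3 - 2*pb2*qb3) (((-2*qa0*qa1 - qa0*qa3 + 2*pa0*pa1 + pa0*pa3 - qa1*qa2 + pa1*pa2 + 2*qa2*qa3 - 2*pa2*pa3 + qb0*qb0 + qb0*qb2 - pb0*pb0 - pb0*pb2 + 2*qb1*pb1 + qb1*pb3 + pb1*qb3 - qb2*qb2 + pb2*pb2 - 2*qb3*pb3) - (2*qa0*pa1 + qa0*pa3 + 2*pa0*qa1 + pa0*qa3 + qa1*pa2 + pa1*qa2 - 2*qa2*pa3 - 2*pa2*qa3 - 2*qb0*pb0 - qb0*pb2 - pb0*qb2 + qb1*qb1 + qb1*qb3 - pb1*pb1 - pb1*pb3 + 2*qb2*pb2 - qb3*qb3 + pb3*pb3))/2)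 (by push_cast; linear_combination hu)
      obtain ⟨hr1, hr23p⟩ := gc_ratsqrt2 (2*qa0*pa0 + qa0*pa2 + pa0*qa2 - qa1*qa1 - qa1*qa3 + pa1*pa1 + pa1*pa3 - 2*qa2*pa2 + qa3*qa3 - pa3*pa3 + 2*qb0*qb1 + qb0*qb3 - 2*pb0*pb1 - pb0*pb3 + qb1*qb2 - pb1*pb2 - 2*qb2*qb3 + 2*pb2*pb3) (((-2*qa0*qa1 - qa0*qa3 + 2*pa0*pa1 + pa0*pa3 - qa1*qa2 + pa1*pa2 + 2*qa2*qa3 - 2*pa2*pa3 + qb0*qb0 + qb0*qb2 - pb0*pb0 - pb0*pb2 + 2*qb1*pb1 + qb1*pb3 + pb1*qb3 - qb2*qb2 + pb2*pb2 - 2*qb3*pb3) + (2*qa0*pa1 + qa0*pa3 + 2*pa0*qa1 + pa0*qa3 + qa1*pa2 + pa1*qa2 - 2*qa2*pa3 - 2*pa2*qa3 - 2*qb0*pb0 - qb0*pb2 - pb0*qb2 + qb1*qb1 + qb1*qb3 - pb1*pb1 - pb1*pb3 + 2*qb2*pb2 - qb3*qb3 + pb3*pb3))/2) (by push_cast; linear_combination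 hv)
      have hr2 : (-2*qa0*qa1 - qa0*qa3 + 2*pa0*pa1 + pa0*pa3 - qa1*qa2 + pa1*pa2 + 2*qa2*qa3 - 2*pa2*pa3 + qb0*qb0 + qb0*qb2 - pb0*pb0 - pb0*pb2 + 2*qb1*pb1 + qb1*pb3 + pb1*qb3 - qb2*qb2 + pb2*pb2 - 2*qb3*pb3) = 0 := by linarith [hr23m, hr23p]
      have hr3 : (2*qa0*pa1 + qa0*pa3 + 2*pa0*qa1 + pa0*qa3 + qa1*pa2 + pa1*qa2 - 2*qa2*pa3 - 2*pa2*qa3 - 2*qb0*pb0 - qb0*pb2 - pb0*qb2 + qb1*qb1 + qb1*qb3 - pb1*pb1 - pb1*pb3 + 2*qb2*pb2 - qb3*qb3 + pb3*pb3) = 0 := by linarith [hr23m, hr23p]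
      obtain ⟨w0, w1, w2, w3, w4, w5, w6, w7, w8, w9, w10, w11, w12, w13, w14, w15⟩ := gc_coreQ pa0 qa0 pa1 qa1 pa2 qa2 pa3 qa3 pb0 qb0 pb1 qb1 pb2 qb2 pb3 qb3 hr0 hr1 hr2 hr3
      constructor
      · rw [emb, ha0, ha1, ha2, ha3, w0, w1, w2, w3, w4, w5, w6, w7]
        push_cast; ring
      · rw [emb, hb0, hb1, hb2, hb3, w8, w9, w10, w11, w12, w13, w14, w15]
        push_cast; ring
    · rintro ⟨hea, heb⟩
      rw [hdet, hea, heb]; ring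
  refine ⟨hdet, key, fun hne => ?_⟩
  rw [Matrix.isUnit_iff_isUnit_det, isUnit_iff_ne_zero]
  intro h0
  exact hne (key.mp h0)
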